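/- arXiv:2010.10494 — 3 statements merged into one kernel-verified Lean document; each statement's English description precedes it below -/
import Mathlib

section
/- For all integers m, s with s ≥ 5 and m > 2s such that the remainder r = m mod 2s satisfies 4 ≤ r ≤ s, there exists a decentralized linear code of length ℓ = 3·(m − r)/(2·s) + 2 for parameters (m, s) that is both correct and secure. -/
namespace SDPicod

/-- Side information set of user `i`: the `s` cyclically consecutive message
indices ending at `i`, i.e. `{i - k : k ∈ Finset.range s}`. -/
def sideInfo (m s : ℕ) (i : ZMod m) : Set (ZMod m) :=
  {j | ∃ k ∈ Finset.range s, j = i - (k : ZMod m)}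

/-- A decentralized linear code: every row is encodable by some user, i.e.
its support is contained in that user's side information set. -/
def IsDecentralizedCode (m s : ℕ) {ℓ : ℕ} (G : Fin ℓ → ZMod m → ZMod 2) : Prop :=
  ∀ t : Fin ℓ, ∃ i : ZMod m, Function.support (G t) ⊆ sideInfo m s i

/-- The set of message indices user `i` can decode: indices `j` outside the
side information set such that the standard basis vector `e j` lies in the
`GF(2)`-span of the rows of `G` together with the basis vectors of the
side information set. -/
def decSet (m s : ℕ) {ℓ : ℕ} (G : Fin ℓ → ZMod m → ZMod 2) (i : ZMod m) :
    Set (ZMod m) :=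
  {j | j ∉ sideInfo m s i ∧
    Pi.single j (1 : ZMod 2) ∈ Submodule.span (ZMod 2)
      (Set.range G ∪ {v | ∃ k ∈ sideInfo m s i, v = Pi.single k (1 : ZMod 2)})}

/-- Correctness: every user can decode at least one new message. -/
def Correct (m s : ℕ) {ℓ : ℕ} (G : Fin ℓ → ZMod m → ZMod 2) : Prop :=
  ∀ i : ZMod m, (decSet m s G i).Nonempty

/-- Security: no user can decode more than one new message. -/
def Secure (m s : ℕ) {ℓ : ℕ} (G : Fin ℓ → ZMod m → ZMod 2) : Prop :=
  ∀ i : ZMod m, (decSet m s G i).Subsingleton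

end SDPicod

open SDPicod


namespace SecProof

/-- nat-level supports of the rows -/
def natRow (s n r t : ℕ) : Finset ℕ :=
  if t < 3*n then
    (if t % 3 = 0 then {2*s*(t/3), 2*s*(t/3)+1}
     else if t % 3 = 1 then {2*s*(t/3)+2, 2*s*(t/3)+s}
     else {2*s*(t/3)+s+1, 2*s*(t/3)+s+2})
  else if t = 3*n then {2*s*n+3-s, 2*s*n+r-s, 2*s*n, 2*s*n+1}
  else {2*s*n+r+1-s, 2*s*n+r+2-s, 2*s*n+2, 2*s*n+3}

def rowS (m s n r : ℕ) (t : ℕ) : Finset (ZMod m) :=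
  (natRow s n r t).image (Nat.cast)

def G (m s n r : ℕ) (t : Fin (3*n+2)) (x : ZMod m) : ZMod 2 :=
  if x ∈ rowS m s n r t.val then 1 else 0

def jmap (m s n : ℕ) (i : ZMod m) : ZMod m :=
  if i.val < 2*s*n then
    (if i.val % (2*s) = 0 ∨ i.val % (2*s) = s+1 then i + 1
     else if i.val % (2*s) = 1 ∨ i.val % (2*s) = s then i - (s : ZMod m)
     else if i.val % (2*s) < s then i + ((s - i.val % (2*s) : ℕ) : ZMod m)
     else i - ((i.val % (2*s) - 2 : ℕ) : ZMod m))
  else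
    (if i.val - 2*s*n = 0 ∨ i.val - 2*s*n = 2 then i + 1
     else if i.val - 2*s*n = 1 then i - (s : ZMod m)
     else i - ((s + (i.val - 2*s*n) - 3 : ℕ) : ZMod m))

section Helpers

variable {m s : ℕ} [NeZero m]

lemma cast_val_eq (a : ZMod m) : ((a.val : ℕ) : ZMod m) = a :=
  ZMod.natCast_rightInverse a

lemma mem_side {i x : ZMod m} (hsm : s < m) :
    x ∈ sideInfo m s i ↔ (i - x).val < s := by
  constructor
  · rintro ⟨k, hk, rfl⟩
    simp only [Finset.mem_range] at hk
    have h : i - (i - (k : ZMod m)) = (k : ZMod m) := by ring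
    rw [h, ZMod.val_cast_of_lt (lt_trans hk hsm)]
    exact hk
  · intro h
    refine ⟨(i - x).val, Finset.mem_range.mpr h, ?_⟩
    rw [cast_val_eq]; ring

lemma val_sub_c (z : ZMod m) (c : ℕ) (hc0 : 0 < c) (hc : c < m) :
    (z - (c : ZMod m)).val = if c ≤ z.val then z.val - c else z.val + m - c := by
  have hmc : ((m - c : ℕ) : ZMod m) = - (c : ZMod m) := by
    have h : ((c : ℕ) : ZMod m) + ((m - c : ℕ) : ZMod m) = 0 := by
      rw [← Nat.cast_add]
      have : c + (m - c) = m := by omega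
      rw [this, ZMod.natCast_self]
    linear_combination h
  have h1 : z - (c : ZMod m) = z + ((m - c : ℕ) : ZMod m) := by rw [hmc]; ring
  have hvc : ((m - c : ℕ) : ZMod m).val = m - c := ZMod.val_cast_of_lt (by omega)
  have hz : z.val < m := ZMod.val_lt z
  rw [h1, ZMod.val_add, hvc]
  by_cases h : c ≤ z.val
  · rw [if_pos h]
    have he : z.val + (m - c) = m + (z.val - c) := by omega
    rw [he, Nat.add_mod_left, Nat.mod_eq_of_lt (by omega)]
  · rw [if_neg h]
    rw [Nat.mod_eq_of_lt (by omega)]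
    omega

lemma val_add_c (z : ZMod m) (c : ℕ) (hc : c < m) :
    (z + (c : ZMod m)).val = if z.val + c < m then z.val + c else z.val + c - m := by
  have hvc : ((c : ℕ) : ZMod m).val = c := ZMod.val_cast_of_lt hc
  have hz : z.val < m := ZMod.val_lt z
  rw [ZMod.val_add, hvc]
  by_cases h : z.val + c < m
  · rw [if_pos h, Nat.mod_eq_of_lt h]
  · rw [if_neg h]
    rw [Nat.mod_eq_sub_mod (by omega), Nat.mod_eq_of_lt (by omega)]

/-- reconstruct i from the difference to an anchor point -/
lemma i_eq_anchor (i : ZMod m) (p : ℕ) :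
    i = ((p + (i - (p:ZMod m)).val : ℕ) : ZMod m) := by
  push_cast
  rw [cast_val_eq]; ring

lemma val_of_anchor (i : ZMod m) (p : ℕ) (h : p + (i - (p:ZMod m)).val < m) :
    i.val = p + (i - (p:ZMod m)).val := by
  conv_lhs => rw [i_eq_anchor i p]
  exact ZMod.val_cast_of_lt h

end Helpers

section Rows

variable {m s n r : ℕ}

lemma mul_bound {u : ℕ} (hu : u < n) : 2*s*u + 2*s ≤ 2*s*n := by
  have h := Nat.mul_le_mul_left (2*s) (Nat.succ_le_of_lt hu)
  rw [Nat.mul_succ] at h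
  exact h

lemma cast_inj_lt [NeZero m] {a b : ℕ} (ha : a < m) (hb : b < m)
    (h : (a : ZMod m) = (b : ZMod m)) : a = b := by
  rw [← ZMod.val_cast_of_lt (n := m) ha, ← ZMod.val_cast_of_lt (n := m) hb, h]

lemma natRow_blockA {u : ℕ} (hu : u < n) : natRow s n r (3*u) = {2*s*u, 2*s*u+1} := by
  unfold natRow
  rw [if_pos (by omega), if_pos (by omega), Nat.mul_div_cancel_left u (by norm_num)]

lemma natRow_blockB {u : ℕ} (hu : u < n) : natRow s n r (3*u+1) = {2*s*u+2, 2*s*u+s} := by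
  unfold natRow
  have h1 : (3*u+1) % 3 = 1 := by omega
  have h2 : (3*u+1) / 3 = u := by omega
  rw [if_pos (by omega), h1, h2]
  norm_num

lemma natRow_blockC {u : ℕ} (hu : u < n) : natRow s n r (3*u+2) = {2*s*u+s+1, 2*s*u+s+2} := by
  unfold natRow
  have h1 : (3*u+2) % 3 = 2 := by omega
  have h2 : (3*u+2) / 3 = u := by omega
  rw [if_pos (by omega), h1, h2]
  norm_num

lemma natRow_R1 : natRow s n r (3*n) = {2*s*n+3-s, 2*s*n+r-s, 2*s*n, 2*s*n+1} := by
  unfold natRow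
  rw [if_neg (by omega), if_pos rfl]

lemma natRow_R2 : natRow s n r (3*n+1) = {2*s*n+r+1-s, 2*s*n+r+2-s, 2*s*n+2, 2*s*n+3} := by
  unfold natRow
  rw [if_neg (by omega), if_neg (by omega)]

lemma natRow_block_cases {t a : ℕ} (ht : t < 3*n) (ha : a ∈ natRow s n r t) :
    (t % 3 = 0 ∧ (a = 2*s*(t/3) ∨ a = 2*s*(t/3)+1)) ∨
    (t % 3 = 1 ∧ (a = 2*s*(t/3)+2 ∨ a = 2*s*(t/3)+s)) ∨
    (t % 3 = 2 ∧ (a = 2*s*(t/3)+s+1 ∨ a = 2*s*(t/3)+s+2)) := by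
  have h3 : t % 3 = 0 ∨ t % 3 = 1 ∨ t % 3 = 2 := by omega
  have hu : t/3 < n := by omega
  rcases h3 with h | h | h
  · left
    have et : t = 3*(t/3) := by omega
    rw [et, natRow_blockA hu] at ha
    simp only [Finset.mem_insert, Finset.mem_singleton] at ha
    exact ⟨h, ha⟩
  · right; left
    have et : t = 3*(t/3)+1 := by omega
    rw [et, natRow_blockB hu] at ha
    simp only [Finset.mem_insert, Finset.mem_singleton] at ha
    exact ⟨h, ha⟩
  · right; right
    have et : t = 3*(t/3)+2 := by omega
    rw [et, natRow_blockC hu] at ha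
    simp only [Finset.mem_insert, Finset.mem_singleton] at ha
    exact ⟨h, ha⟩

lemma natRow_block_mem {t a : ℕ} (ht : t < 3*n) (ha : a ∈ natRow s n r t) :
    2*s*(t/3) ≤ a ∧ a ≤ 2*s*(t/3) + s + 2 ∧ t/3 < n := by
  have hu : t/3 < n := by omega
  rcases natRow_block_cases ht ha with ⟨_, h⟩ | ⟨_, h⟩ | ⟨_, h⟩ <;>
    rcases h with rfl | rfl <;> exact ⟨by omega, by omega, hu⟩

lemma natRow_seam_mem {t a : ℕ} (ht : t = 3*n ∨ t = 3*n+1) (ha : a ∈ natRow s n r t)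
    (hs : 5 ≤ s) (hr4 : 4 ≤ r) (hrs : r ≤ s) (hn : 1 ≤ n) :
    2*s*n+3-s ≤ a ∧ a ≤ 2*s*n+3 ∧ 2*s ≤ 2*s*n := by
  have hb : 2*s*1 ≤ 2*s*n := Nat.mul_le_mul_left _ hn
  rcases ht with rfl | rfl
  · rw [natRow_R1] at ha
    simp only [Finset.mem_insert, Finset.mem_singleton] at ha
    rcases ha with rfl | rfl | rfl | rfl <;> refine ⟨by omega, by omega, by omega⟩
  · rw [natRow_R2] at ha
    simp only [Finset.mem_insert, Finset.mem_singleton] at ha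
    rcases ha with rfl | rfl | rfl | rfl <;> refine ⟨by omega, by omega, by omega⟩

lemma natRow_lt_m {t a : ℕ} (ht : t < 3*n+2) (ha : a ∈ natRow s n r t)
    (hs : 5 ≤ s) (hr4 : 4 ≤ r) (hrs : r ≤ s) (hn : 1 ≤ n) (hmeq : m = 2*s*n+r) :
    a < m := by
  by_cases hb : t < 3*n
  · obtain ⟨h1, h2, hu⟩ := natRow_block_mem hb ha
    have := mul_bound (n := n) (s := s) hu
    omega
  · have := natRow_seam_mem (t := t) (by omega) ha hs hr4 hrs hn
    omega

lemma natRow_disj {t t' : ℕ} (ht : t < 3*n+2) (ht' : t' < 3*n+2) (hne : t ≠ t')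
    (hblk : t < 3*n ∨ t' < 3*n) (hs : 5 ≤ s) (hr4 : 4 ≤ r) (hrs : r ≤ s) (hn : 1 ≤ n) :
    Disjoint (natRow s n r t) (natRow s n r t') := by
  rw [Finset.disjoint_left]
  intro a ha ha'
  by_cases hb : t < 3*n <;> by_cases hb' : t' < 3*n
  · by_cases huu : t/3 = t'/3
    · rcases natRow_block_cases hb ha with ⟨p1, h1⟩ | ⟨p1, h1⟩ | ⟨p1, h1⟩ <;>
        rcases natRow_block_cases hb' ha' with ⟨p2, h2⟩ | ⟨p2, h2⟩ | ⟨p2, h2⟩ <;>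
        rw [← huu] at h2 <;> omega
    · rcases Nat.lt_or_ge (t/3) (t'/3) with hlt | hge
      · have hbd := mul_bound (n := t'/3) (s := s) hlt
        obtain ⟨l1, u1, -⟩ := natRow_block_mem hb ha
        obtain ⟨l2, u2, -⟩ := natRow_block_mem hb' ha'
        omega
      · have hlt : t'/3 < t/3 := by omega
        have hbd := mul_bound (n := t/3) (s := s) hlt
        obtain ⟨l1, u1, -⟩ := natRow_block_mem hb ha
        obtain ⟨l2, u2, -⟩ := natRow_block_mem hb' ha'
        omega
  · obtain ⟨h2a, h2b, h2c⟩ := natRow_seam_mem (t := t') (by omega) ha' hs hr4 hrs hn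
    obtain ⟨l1, u1, hu⟩ := natRow_block_mem hb ha
    have := mul_bound (n := n) (s := s) hu
    omega
  · obtain ⟨h1a, h1b, h1c⟩ := natRow_seam_mem (t := t) (by omega) ha hs hr4 hrs hn
    obtain ⟨l2, u2, hu⟩ := natRow_block_mem hb' ha'
    have := mul_bound (n := n) (s := s) hu
    omega
  · omega

lemma mem_rowS {x : ZMod m} {t : ℕ} :
    x ∈ rowS m s n r t ↔ ∃ a ∈ natRow s n r t, (a : ZMod m) = x := by
  simp [rowS, Finset.mem_image]

lemma rowS_disj [NeZero m] {t t' : ℕ} (ht : t < 3*n+2) (ht' : t' < 3*n+2) (hne : t ≠ t')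
    (hblk : t < 3*n ∨ t' < 3*n) (hs : 5 ≤ s) (hr4 : 4 ≤ r) (hrs : r ≤ s) (hn : 1 ≤ n)
    (hmeq : m = 2*s*n+r) :
    Disjoint (rowS m s n r t) (rowS m s n r t') := by
  rw [Finset.disjoint_left]
  intro x hx hx'
  obtain ⟨a, ha, rfl⟩ := mem_rowS.mp hx
  obtain ⟨b, hb, hab⟩ := mem_rowS.mp hx'
  have hal := natRow_lt_m ht ha hs hr4 hrs hn hmeq
  have hbl := natRow_lt_m ht' hb hs hr4 hrs hn hmeq
  have : b = a := cast_inj_lt hbl hal hab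
  subst this
  exact (Finset.disjoint_left.mp (natRow_disj ht ht' hne hblk hs hr4 hrs hn) ha) hb

end Rows
section Cut

variable {m s n r : ℕ} [NeZero m]

lemma val_anchor_add (i : ZMod m) (p c : ℕ) (hc0 : 0 < c) (hc : c < m) :
    (i - ((p+c : ℕ) : ZMod m)).val =
      if c ≤ (i - (p:ZMod m)).val then (i - (p:ZMod m)).val - c
      else (i - (p:ZMod m)).val + m - c := by
  have h : i - ((p+c:ℕ) : ZMod m) = (i - (p:ZMod m)) - ((c:ℕ) : ZMod m) := by
    push_cast; ring
  rw [h, val_sub_c _ c hc0 hc]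

lemma sub_anchor_val {i : ZMod m} (p d : ℕ) (h : p + d < m) (hv : i.val = p + d) :
    (i - (p:ZMod m)).val = d := by
  have hi : i = ((p + d : ℕ) : ZMod m) := by rw [← hv, cast_val_eq]
  rw [hi]
  have h2 : ((p + d : ℕ) : ZMod m) - (p:ZMod m) = ((d:ℕ) : ZMod m) := by push_cast; ring
  rw [h2, ZMod.val_cast_of_lt (by omega)]

/-- predicate: the only possible singleton-cut value of a row is the cover map value -/
def CutHyp (m s n r : ℕ) (S : Finset (ZMod m)) : Prop :=
  ∀ i x, x ∈ S → x ∉ sideInfo m s i →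
    (∀ y ∈ S, y ≠ x → y ∈ sideInfo m s i) → x = jmap m s n i

lemma two_s_le (hn : 1 ≤ n) : 2*s*1 ≤ 2*s*n := Nat.mul_le_mul_left _ hn

lemma jmap_block_eval {i : ZMod m} {u w : ℕ} (hu : u < n) (hw : w < 2*s)
    (hv : i.val = 2*s*u + w) :
    jmap m s n i =
      (if w = 0 ∨ w = s+1 then i + 1
       else if w = 1 ∨ w = s then i - (s:ZMod m)
       else if w < s then i + ((s - w : ℕ) : ZMod m)
       else i - ((w - 2 : ℕ) : ZMod m)) := by
  have hbd := mul_bound (n := n) (s := s) hu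
  have h1 : i.val < 2*s*n := by omega
  have h2 : i.val % (2*s) = w := by rw [hv, Nat.mul_add_mod, Nat.mod_eq_of_lt hw]
  unfold jmap
  rw [if_pos h1, h2]

lemma jmap_seam_eval {i : ZMod m} {o : ℕ} (hv : i.val = 2*s*n + o) :
    jmap m s n i =
      (if o = 0 ∨ o = 2 then i + 1
       else if o = 1 then i - (s:ZMod m)
       else i - ((s + o - 3 : ℕ) : ZMod m)) := by
  unfold jmap
  have h1 : ¬ i.val < 2*s*n := by omega
  have h2 : i.val - 2*s*n = o := by omega
  rw [if_neg h1, h2]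

lemma i_as_cast {i : ZMod m} {V : ℕ} (hv : i.val = V) : i = ((V : ℕ) : ZMod m) := by
  rw [← hv, cast_val_eq]

lemma cut_blockA (hs : 5 ≤ s) (hr4 : 4 ≤ r) (hrs : r ≤ s) (hn : 1 ≤ n) (hmeq : m = 2*s*n+r)
    {u : ℕ} (hu : u < n) : CutHyp m s n r (rowS m s n r (3*u)) := by
  intro i x hx hout hin
  have hbd := mul_bound (n := n) (s := s) hu
  have h2s := two_s_le (s := s) (n := n) hn
  have hsm : s < m := by omega
  set p := 2*s*u with hp
  have hrow : rowS m s n r (3*u) = {((p:ℕ) : ZMod m), ((p+1:ℕ) : ZMod m)} := by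
    rw [rowS, natRow_blockA hu, Finset.image_insert, Finset.image_singleton]
  have hnept : ((p:ℕ) : ZMod m) ≠ ((p+1:ℕ) : ZMod m) := fun h => by
    have := cast_inj_lt (m := m) (by omega) (by omega) h; omega
  rw [hrow] at hx hin
  simp only [Finset.mem_insert, Finset.mem_singleton] at hx
  set d := (i - ((p:ℕ) : ZMod m)).val with hd
  have hdlt : d < m := ZMod.val_lt _
  rcases hx with rfl | rfl
  · -- x = p outside, p+1 inside
    have hin1 : ((p+1:ℕ) : ZMod m) ∈ sideInfo m s i := hin _ (by simp) (Ne.symm hnept)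
    rw [mem_side hsm] at hin1 hout
    rw [val_anchor_add i p 1 (by omega) (by omega)] at hin1
    have hde : d = s := by
      by_cases hc : 1 ≤ d
      · rw [if_pos hc] at hin1; omega
      · rw [if_neg hc] at hin1; omega
    have hiv : i.val = p + s := by rw [val_of_anchor i p (by omega)]; omega
    rw [jmap_block_eval hu (by omega) hiv, if_neg (by omega), if_pos (by omega),
        eq_sub_iff_add_eq, i_as_cast hiv, ← Nat.cast_add]
  · -- x = p+1 outside, p inside
    have hin1 : ((p:ℕ) : ZMod m) ∈ sideInfo m s i := hin _ (by simp) hnept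
    rw [mem_side hsm] at hin1 hout
    rw [val_anchor_add i p 1 (by omega) (by omega)] at hout
    have hde : d = 0 := by
      by_cases hc : 1 ≤ d
      · rw [if_pos hc] at hout; omega
      · omega
    have hiv : i.val = p + 0 := by rw [val_of_anchor i p (by omega)]; omega
    rw [jmap_block_eval hu (by omega) hiv, if_pos (by omega), i_as_cast hiv]
    push_cast
    ring

lemma cut_blockB (hs : 5 ≤ s) (hr4 : 4 ≤ r) (hrs : r ≤ s) (hn : 1 ≤ n) (hmeq : m = 2*s*n+r)
    {u : ℕ} (hu : u < n) : CutHyp m s n r (rowS m s n r (3*u+1)) := by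
  intro i x hx hout hin
  have hbd := mul_bound (n := n) (s := s) hu
  have h2s := two_s_le (s := s) (n := n) hn
  have hsm : s < m := by omega
  set p := 2*s*u with hp
  have hrow : rowS m s n r (3*u+1) = {((p+2:ℕ) : ZMod m), ((p+s:ℕ) : ZMod m)} := by
    rw [rowS, natRow_blockB hu, Finset.image_insert, Finset.image_singleton]
  have hnept : ((p+2:ℕ) : ZMod m) ≠ ((p+s:ℕ) : ZMod m) := fun h => by
    have := cast_inj_lt (m := m) (by omega) (by omega) h; omega
  rw [hrow] at hx hin
  simp only [Finset.mem_insert, Finset.mem_singleton] at hx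
  set d := (i - ((p:ℕ) : ZMod m)).val with hd
  have hdlt : d < m := ZMod.val_lt _
  rcases hx with rfl | rfl
  · -- x = p+2 outside, p+s inside
    have hin1 : ((p+s:ℕ) : ZMod m) ∈ sideInfo m s i := hin _ (by simp) (Ne.symm hnept)
    rw [mem_side hsm] at hin1 hout
    rw [val_anchor_add i p s (by omega) (by omega)] at hin1
    rw [val_anchor_add i p 2 (by omega) (by omega)] at hout
    have hdr : s + 2 ≤ d ∧ d < 2*s := by
      by_cases hc : s ≤ d
      · rw [if_pos hc] at hin1
        by_cases hc2 : 2 ≤ d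
        · rw [if_pos hc2] at hout; omega
        · omega
      · rw [if_neg hc] at hin1; omega
    have hiv : i.val = p + d := val_of_anchor i p (by omega)
    rw [jmap_block_eval hu (by omega) hiv, if_neg (by omega), if_neg (by omega),
        if_neg (by omega), eq_sub_iff_add_eq, i_as_cast hiv, ← Nat.cast_add]
    congr 1
    omega
  · -- x = p+s outside, p+2 inside
    have hin1 : ((p+2:ℕ) : ZMod m) ∈ sideInfo m s i := hin _ (by simp) hnept
    rw [mem_side hsm] at hin1 hout
    rw [val_anchor_add i p 2 (by omega) (by omega)] at hin1
    rw [val_anchor_add i p s (by omega) (by omega)] at hout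
    have hdr : 2 ≤ d ∧ d < s := by
      by_cases hc : 2 ≤ d
      · rw [if_pos hc] at hin1
        by_cases hc2 : s ≤ d
        · rw [if_pos hc2] at hout; omega
        · omega
      · rw [if_neg hc] at hin1; omega
    have hiv : i.val = p + d := val_of_anchor i p (by omega)
    rw [jmap_block_eval hu (by omega) hiv, if_neg (by omega), if_neg (by omega),
        if_pos (by omega), i_as_cast hiv, ← Nat.cast_add]
    congr 1
    omega

lemma cut_blockC (hs : 5 ≤ s) (hr4 : 4 ≤ r) (hrs : r ≤ s) (hn : 1 ≤ n) (hmeq : m = 2*s*n+r)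
    {u : ℕ} (hu : u < n) : CutHyp m s n r (rowS m s n r (3*u+2)) := by
  intro i x hx hout hin
  have hbd := mul_bound (n := n) (s := s) hu
  have h2s := two_s_le (s := s) (n := n) hn
  have hsm : s < m := by omega
  set p := 2*s*u with hp
  have hrow : rowS m s n r (3*u+2) = {((p+s+1:ℕ) : ZMod m), ((p+s+2:ℕ) : ZMod m)} := by
    rw [rowS, natRow_blockC hu, Finset.image_insert, Finset.image_singleton]
  have hnept : ((p+s+1:ℕ) : ZMod m) ≠ ((p+s+2:ℕ) : ZMod m) := fun h => by
    have := cast_inj_lt (m := m) (by omega) (by omega) h; omega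
  rw [hrow] at hx hin
  simp only [Finset.mem_insert, Finset.mem_singleton] at hx
  set d := (i - ((p+s+1:ℕ) : ZMod m)).val with hd
  have hdlt : d < m := ZMod.val_lt _
  have hcast : (p+s+2 : ℕ) = (p+s+1) + 1 := by omega
  rcases hx with rfl | rfl
  · -- x = p+s+1 outside, p+s+2 inside
    have hin1 : ((p+s+2:ℕ) : ZMod m) ∈ sideInfo m s i := hin _ (by simp) (Ne.symm hnept)
    rw [mem_side hsm] at hin1 hout
    rw [hcast, val_anchor_add i (p+s+1) 1 (by omega) (by omega)] at hin1
    have hde : d = s := by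
      by_cases hc : 1 ≤ d
      · rw [if_pos hc] at hin1; omega
      · rw [if_neg hc] at hin1; omega
    have hanch : (p+s+1) + d < m := by omega
    have hiv : i.val = (p+s+1) + d := val_of_anchor i (p+s+1) hanch
    have hgoal : jmap m s n i = i - (s : ZMod m) := by
      by_cases hlast : u + 1 < n
      · have hbd2 := mul_bound (n := n) (s := s) hlast
        have hv2 : i.val = 2*s*(u+1) + 1 := by rw [hiv, hde, hp]; ring
        rw [jmap_block_eval hlast (by omega) hv2, if_neg (by omega), if_pos (by omega)]
      · have hv2 : i.val = 2*s*n + 1 := by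
          have hun : n = u + 1 := by omega
          rw [hiv, hun, hde, hp]; ring
        rw [jmap_seam_eval hv2, if_neg (by omega), if_pos rfl]
    rw [hgoal, eq_sub_iff_add_eq, i_as_cast hiv, ← Nat.cast_add]
    congr 1
    omega
  · -- x = p+s+2 outside, p+s+1 inside
    have hin1 : ((p+s+1:ℕ) : ZMod m) ∈ sideInfo m s i := hin _ (by simp) hnept
    rw [mem_side hsm] at hin1 hout
    rw [hcast, val_anchor_add i (p+s+1) 1 (by omega) (by omega)] at hout
    have hde : d = 0 := by
      by_cases hc : 1 ≤ d
      · rw [if_pos hc] at hout; omega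
      · omega
    have hiv : i.val = 2*s*u + (s+1) := by
      have h := val_of_anchor i (p+s+1) (by omega)
      omega
    rw [jmap_block_eval hu (by omega) hiv, if_pos (by omega), i_as_cast hiv,
        show (p+s+2:ℕ) = (2*s*u+(s+1)) + 1 by omega, Nat.cast_add, Nat.cast_one]

end Cut
section SeamCut

variable {m s n r : ℕ} [NeZero m]

lemma cast_ne_of_ne {a b : ℕ} (ha : a < m) (hb : b < m) (hne : a ≠ b) :
    (a : ZMod m) ≠ (b : ZMod m) := fun h => hne (cast_inj_lt ha hb h)

lemma cut_R1 (hs : 5 ≤ s) (hr4 : 4 ≤ r) (hrs : r ≤ s) (hn : 1 ≤ n) (hmeq : m = 2*s*n+r) :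
    CutHyp m s n r (rowS m s n r (3*n)) := by
  intro i x hx hout hin
  have h2s := two_s_le (s := s) (n := n) hn
  have hsm : s < m := by omega
  set A := 2*s*n+3-s with hA
  set B := 2*s*n+r-s with hB
  set C := 2*s*n with hC
  set D := 2*s*n+1 with hD
  have hrow : rowS m s n r (3*n) = {((A:ℕ) : ZMod m), ((B:ℕ) : ZMod m), ((C:ℕ) : ZMod m), ((D:ℕ) : ZMod m)} := by
    rw [rowS, natRow_R1, Finset.image_insert, Finset.image_insert, Finset.image_insert,
      Finset.image_singleton]
  have eB : B = A + (r-3) := by omega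
  have eC : C = A + (s-3) := by omega
  have eD : D = A + (s-2) := by omega
  rw [hrow] at hx hin
  simp only [Finset.mem_insert, Finset.mem_singleton] at hx
  set dA := (i - ((A:ℕ) : ZMod m)).val with hdA
  have hdlt : dA < m := ZMod.val_lt _
  have memA : ((A:ℕ):ZMod m) ∈ ({((A:ℕ) : ZMod m), ((B:ℕ) : ZMod m), ((C:ℕ) : ZMod m), ((D:ℕ) : ZMod m)} : Finset (ZMod m)) := by simp
  have memB : ((B:ℕ):ZMod m) ∈ ({((A:ℕ) : ZMod m), ((B:ℕ) : ZMod m), ((C:ℕ) : ZMod m), ((D:ℕ) : ZMod m)} : Finset (ZMod m)) := by simp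
  have memC : ((C:ℕ):ZMod m) ∈ ({((A:ℕ) : ZMod m), ((B:ℕ) : ZMod m), ((C:ℕ) : ZMod m), ((D:ℕ) : ZMod m)} : Finset (ZMod m)) := by simp
  have memD : ((D:ℕ):ZMod m) ∈ ({((A:ℕ) : ZMod m), ((B:ℕ) : ZMod m), ((C:ℕ) : ZMod m), ((D:ℕ) : ZMod m)} : Finset (ZMod m)) := by simp
  rcases hx with rfl | rfl | rfl | rfl
  · -- x = A : decoded in window range [2sn+3, 2sn+r-1]
    have hinB : ((B:ℕ) : ZMod m) ∈ sideInfo m s i :=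
      hin _ memB (cast_ne_of_ne (by omega) (by omega) (by omega))
    have hinD : ((D:ℕ) : ZMod m) ∈ sideInfo m s i :=
      hin _ memD (cast_ne_of_ne (by omega) (by omega) (by omega))
    rw [mem_side hsm] at hinB hinD hout
    rw [eB, val_anchor_add i A (r-3) (by omega) (by omega)] at hinB
    rw [eD, val_anchor_add i A (s-2) (by omega) (by omega)] at hinD
    have hrange : s ≤ dA ∧ dA ≤ s + r - 4 := by
      rw [if_pos (by omega)] at hinB
      omega
    have hiv : i.val = A + dA := val_of_anchor i A (by omega)
    have hv2 : i.val = 2*s*n + (dA - s + 3) := by omega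
    rw [jmap_seam_eval hv2, if_neg (by omega), if_neg (by omega),
      show s + (dA - s + 3) - 3 = dA by omega,
      eq_sub_iff_add_eq, i_as_cast hiv, ← Nat.cast_add]
  · -- x = B : impossible
    exfalso
    have hinA : ((A:ℕ) : ZMod m) ∈ sideInfo m s i :=
      hin _ memA (cast_ne_of_ne (by omega) (by omega) (by omega))
    have hinD : ((D:ℕ) : ZMod m) ∈ sideInfo m s i :=
      hin _ memD (cast_ne_of_ne (by omega) (by omega) (by omega))
    rw [mem_side hsm] at hinA hinD hout
    rw [eD, val_anchor_add i A (s-2) (by omega) (by omega)] at hinD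
    rw [eB, val_anchor_add i A (r-3) (by omega) (by omega)] at hout
    have h1 : s - 2 ≤ dA := by
      by_cases hc : s-2 ≤ dA
      · exact hc
      · rw [if_neg hc] at hinD; omega
    rw [if_pos (by omega)] at hout
    omega
  · -- x = C : impossible
    exfalso
    have hinA : ((A:ℕ) : ZMod m) ∈ sideInfo m s i :=
      hin _ memA (cast_ne_of_ne (by omega) (by omega) (by omega))
    have hinD : ((D:ℕ) : ZMod m) ∈ sideInfo m s i :=
      hin _ memD (cast_ne_of_ne (by omega) (by omega) (by omega))
    rw [mem_side hsm] at hinA hinD hout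
    rw [eD, val_anchor_add i A (s-2) (by omega) (by omega)] at hinD
    rw [eC, val_anchor_add i A (s-3) (by omega) (by omega)] at hout
    have h1 : s - 2 ≤ dA := by
      by_cases hc : s-2 ≤ dA
      · exact hc
      · rw [if_neg hc] at hinD; omega
    rw [if_pos (by omega)] at hout
    omega
  · -- x = D : window 2sn, decode 2sn+1
    have hinA : ((A:ℕ) : ZMod m) ∈ sideInfo m s i :=
      hin _ memA (cast_ne_of_ne (by omega) (by omega) (by omega))
    have hinC : ((C:ℕ) : ZMod m) ∈ sideInfo m s i :=
      hin _ memC (cast_ne_of_ne (by omega) (by omega) (by omega))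
    rw [mem_side hsm] at hinA hinC hout
    rw [eC, val_anchor_add i A (s-3) (by omega) (by omega)] at hinC
    rw [eD, val_anchor_add i A (s-2) (by omega) (by omega)] at hout
    have h1 : s - 3 ≤ dA := by
      by_cases hc : s-3 ≤ dA
      · exact hc
      · rw [if_neg hc] at hinC; omega
    have h2 : dA < s - 2 := by
      by_cases hc : s-2 ≤ dA
      · rw [if_pos hc] at hout; omega
      · omega
    have hde : dA = s - 3 := by omega
    have hiv : i.val = A + dA := val_of_anchor i A (by omega)
    have hv2 : i.val = 2*s*n + 0 := by omega
    rw [jmap_seam_eval hv2, if_pos (by omega), i_as_cast hiv,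
      show (D:ℕ) = (A + dA) + 1 by omega, Nat.cast_add, Nat.cast_one]

lemma cut_R2 (hs : 5 ≤ s) (hr4 : 4 ≤ r) (hrs : r ≤ s) (hn : 1 ≤ n) (hmeq : m = 2*s*n+r) :
    CutHyp m s n r (rowS m s n r (3*n+1)) := by
  intro i x hx hout hin
  have h2s := two_s_le (s := s) (n := n) hn
  have hsm : s < m := by omega
  set E := 2*s*n+r+1-s with hE
  set F := 2*s*n+r+2-s with hF
  set Gg := 2*s*n+2 with hGg
  set H := 2*s*n+3 with hH
  have hrow : rowS m s n r (3*n+1) = {((E:ℕ) : ZMod m), ((F:ℕ) : ZMod m), ((Gg:ℕ) : ZMod m), ((H:ℕ) : ZMod m)} := by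
    rw [rowS, natRow_R2, Finset.image_insert, Finset.image_insert, Finset.image_insert,
      Finset.image_singleton]
  have eF : F = E + 1 := by omega
  have eG : Gg = E + (s+1-r) := by omega
  have eH : H = E + (s+2-r) := by omega
  rw [hrow] at hx hin
  simp only [Finset.mem_insert, Finset.mem_singleton] at hx
  set dE := (i - ((E:ℕ) : ZMod m)).val with hdE
  have hdlt : dE < m := ZMod.val_lt _
  have memE : ((E:ℕ):ZMod m) ∈ ({((E:ℕ) : ZMod m), ((F:ℕ) : ZMod m), ((Gg:ℕ) : ZMod m), ((H:ℕ) : ZMod m)} : Finset (ZMod m)) := by simp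
  have memF : ((F:ℕ):ZMod m) ∈ ({((E:ℕ) : ZMod m), ((F:ℕ) : ZMod m), ((Gg:ℕ) : ZMod m), ((H:ℕ) : ZMod m)} : Finset (ZMod m)) := by simp
  have memG : ((Gg:ℕ):ZMod m) ∈ ({((E:ℕ) : ZMod m), ((F:ℕ) : ZMod m), ((Gg:ℕ) : ZMod m), ((H:ℕ) : ZMod m)} : Finset (ZMod m)) := by simp
  have memH : ((H:ℕ):ZMod m) ∈ ({((E:ℕ) : ZMod m), ((F:ℕ) : ZMod m), ((Gg:ℕ) : ZMod m), ((H:ℕ) : ZMod m)} : Finset (ZMod m)) := by simp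
  rcases hx with rfl | rfl | rfl | rfl
  · -- x = E : window wraps to 1, decode E
    have hinF : ((F:ℕ) : ZMod m) ∈ sideInfo m s i :=
      hin _ memF (cast_ne_of_ne (by omega) (by omega) (by omega))
    rw [mem_side hsm] at hinF hout
    rw [eF, val_anchor_add i E 1 (by omega) (by omega)] at hinF
    have hde : dE = s := by
      by_cases hc : 1 ≤ dE
      · rw [if_pos hc] at hinF; omega
      · rw [if_neg hc] at hinF; omega
    have hieq : i = ((1:ℕ) : ZMod m) := by
      rw [i_eq_anchor i E, ← hdE, hde, show (E + s : ℕ) = m + 1 by omega]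
      push_cast [ZMod.natCast_self]
      ring
    have hiv : i.val = 2*s*0 + 1 := by
      rw [hieq, ZMod.val_cast_of_lt (by omega)]
      omega
    rw [jmap_block_eval hn (by omega) hiv, if_neg (by omega), if_pos (by omega),
      eq_sub_iff_add_eq, hieq, ← Nat.cast_add, show (E + s : ℕ) = m + 1 by omega]
    push_cast [ZMod.natCast_self]
    ring
  · -- x = F : impossible
    exfalso
    have hinE : ((E:ℕ) : ZMod m) ∈ sideInfo m s i :=
      hin _ memE (cast_ne_of_ne (by omega) (by omega) (by omega))
    have hinH : ((H:ℕ) : ZMod m) ∈ sideInfo m s i :=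
      hin _ memH (cast_ne_of_ne (by omega) (by omega) (by omega))
    rw [mem_side hsm] at hinE hinH hout
    rw [eH, val_anchor_add i E (s+2-r) (by omega) (by omega)] at hinH
    rw [eF, val_anchor_add i E 1 (by omega) (by omega)] at hout
    by_cases hc : 1 ≤ dE
    · rw [if_pos hc] at hout; omega
    · have h0 : dE = 0 := by omega
      rw [if_neg (by omega)] at hinH
      omega
  · -- x = Gg : impossible
    exfalso
    have hinE : ((E:ℕ) : ZMod m) ∈ sideInfo m s i :=
      hin _ memE (cast_ne_of_ne (by omega) (by omega) (by omega))
    have hinH : ((H:ℕ) : ZMod m) ∈ sideInfo m s i :=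
      hin _ memH (cast_ne_of_ne (by omega) (by omega) (by omega))
    rw [mem_side hsm] at hinE hinH hout
    rw [eH, val_anchor_add i E (s+2-r) (by omega) (by omega)] at hinH
    rw [eG, val_anchor_add i E (s+1-r) (by omega) (by omega)] at hout
    have h1 : s+2-r ≤ dE := by
      by_cases hc : s+2-r ≤ dE
      · exact hc
      · rw [if_neg hc] at hinH; omega
    rw [if_pos (by omega)] at hout
    omega
  · -- x = H : window 2sn+2, decode 2sn+3
    have hinE : ((E:ℕ) : ZMod m) ∈ sideInfo m s i :=
      hin _ memE (cast_ne_of_ne (by omega) (by omega) (by omega))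
    have hinG : ((Gg:ℕ) : ZMod m) ∈ sideInfo m s i :=
      hin _ memG (cast_ne_of_ne (by omega) (by omega) (by omega))
    rw [mem_side hsm] at hinE hinG hout
    rw [eG, val_anchor_add i E (s+1-r) (by omega) (by omega)] at hinG
    rw [eH, val_anchor_add i E (s+2-r) (by omega) (by omega)] at hout
    have h1 : s+1-r ≤ dE := by
      by_cases hc : s+1-r ≤ dE
      · exact hc
      · rw [if_neg hc] at hinG; omega
    have h2 : dE < s+2-r := by
      by_cases hc : s+2-r ≤ dE
      · rw [if_pos hc] at hout; omega
      · omega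
    have hde : dE = s+1-r := by omega
    have hiv : i.val = E + dE := val_of_anchor i E (by omega)
    have hv2 : i.val = 2*s*n + 2 := by omega
    rw [jmap_seam_eval hv2, if_pos (by omega), i_as_cast hiv,
      show (H:ℕ) = (E + dE) + 1 by omega, Nat.cast_add, Nat.cast_one]

lemma cut_Delta (hs : 5 ≤ s) (hr4 : 4 ≤ r) (hrs : r ≤ s) (hn : 1 ≤ n) (hmeq : m = 2*s*n+r) :
    CutHyp m s n r ((rowS m s n r (3*n) ∪ rowS m s n r (3*n+1)) \
      (rowS m s n r (3*n) ∩ rowS m s n r (3*n+1))) := by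
  intro i x hx hout hin
  have h2s := two_s_le (s := s) (n := n) hn
  have hsm : s < m := by omega
  set A := 2*s*n+3-s with hA
  set B := 2*s*n+r-s with hB
  set Gg := 2*s*n+2 with hGg
  set H := 2*s*n+3 with hH
  have hrow1 : natRow s n r (3*n) = {2*s*n+3-s, 2*s*n+r-s, 2*s*n, 2*s*n+1} := natRow_R1
  have hrow2 : natRow s n r (3*n+1) = {2*s*n+r+1-s, 2*s*n+r+2-s, 2*s*n+2, 2*s*n+3} := natRow_R2
  -- membership of the four corner points in the symmetric difference
  have hmem1 : ∀ a : ℕ, a < m → a ∈ natRow s n r (3*n) → (∀ b ∈ natRow s n r (3*n+1), a ≠ b) →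
      ((a:ℕ) : ZMod m) ∈ (rowS m s n r (3*n) ∪ rowS m s n r (3*n+1)) \
        (rowS m s n r (3*n) ∩ rowS m s n r (3*n+1)) := by
    intro a ha hmem hne
    rw [Finset.mem_sdiff, Finset.mem_union, Finset.mem_inter]
    constructor
    · left; exact Finset.mem_image_of_mem _ hmem
    · rintro ⟨-, h2⟩
      obtain ⟨b, hb, hba⟩ := mem_rowS.mp h2
      have hbl : b < m := natRow_lt_m (by omega) hb hs hr4 hrs hn hmeq
      exact hne b hb (cast_inj_lt ha hbl hba.symm)
  have hmem2 : ∀ a : ℕ, a < m → a ∈ natRow s n r (3*n+1) → (∀ b ∈ natRow s n r (3*n), a ≠ b) →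
      ((a:ℕ) : ZMod m) ∈ (rowS m s n r (3*n) ∪ rowS m s n r (3*n+1)) \
        (rowS m s n r (3*n) ∩ rowS m s n r (3*n+1)) := by
    intro a ha hmem hne
    rw [Finset.mem_sdiff, Finset.mem_union, Finset.mem_inter]
    constructor
    · right; exact Finset.mem_image_of_mem _ hmem
    · rintro ⟨h1, -⟩
      obtain ⟨b, hb, hba⟩ := mem_rowS.mp h1
      have hbl : b < m := natRow_lt_m (by omega) hb hs hr4 hrs hn hmeq
      exact hne b hb (cast_inj_lt ha hbl hba.symm)
  have hAmem : ((A:ℕ) : ZMod m) ∈ _ := hmem1 A (by omega) (by rw [hrow1]; simp [hA, hH]) (by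
    intro b hb
    rw [hrow2] at hb
    simp only [Finset.mem_insert, Finset.mem_singleton] at hb
    rcases hb with rfl | rfl | rfl | rfl <;> omega)
  have hBmem : ((B:ℕ) : ZMod m) ∈ _ := hmem1 B (by omega) (by rw [hrow1]; simp [hB]) (by
    intro b hb
    rw [hrow2] at hb
    simp only [Finset.mem_insert, Finset.mem_singleton] at hb
    rcases hb with rfl | rfl | rfl | rfl <;> omega)
  have hGmem : ((Gg:ℕ) : ZMod m) ∈ _ := hmem2 Gg (by omega) (by rw [hrow2]; simp [hGg]) (by
    intro b hb
    rw [hrow1] at hb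
    simp only [Finset.mem_insert, Finset.mem_singleton] at hb
    rcases hb with rfl | rfl | rfl | rfl <;> omega)
  have hHmem : ((H:ℕ) : ZMod m) ∈ _ := hmem2 H (by omega) (by rw [hrow2]; simp [hH]) (by
    intro b hb
    rw [hrow1] at hb
    simp only [Finset.mem_insert, Finset.mem_singleton] at hb
    rcases hb with rfl | rfl | rfl | rfl <;> omega)
  by_cases hxA : x = ((A:ℕ) : ZMod m)
  · -- x = A: windows [2sn+3, 2sn+r-1]
    subst hxA
    have hinB : ((B:ℕ) : ZMod m) ∈ sideInfo m s i :=
      hin _ hBmem (cast_ne_of_ne (by omega) (by omega) (by omega))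
    have hinH : ((H:ℕ) : ZMod m) ∈ sideInfo m s i :=
      hin _ hHmem (cast_ne_of_ne (by omega) (by omega) (by omega))
    rw [mem_side hsm] at hinB hinH hout
    set dA := (i - ((A:ℕ) : ZMod m)).val with hdA
    have hdlt : dA < m := ZMod.val_lt _
    rw [show (B:ℕ) = A + (r-3) by omega, val_anchor_add i A (r-3) (by omega) (by omega)] at hinB
    rw [show (H:ℕ) = A + s by omega, val_anchor_add i A s (by omega) (by omega)] at hinH
    have hrange : s ≤ dA ∧ dA ≤ s + r - 4 := by
      constructor
      · by_cases hc : s ≤ dA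
        · exact hc
        · rw [if_neg hc] at hinH; omega
      · rw [if_pos (by omega)] at hinB; omega
    have hiv : i.val = A + dA := val_of_anchor i A (by omega)
    have hv2 : i.val = 2*s*n + (dA - s + 3) := by omega
    rw [jmap_seam_eval hv2, if_neg (by omega), if_neg (by omega),
      show s + (dA - s + 3) - 3 = dA by omega,
      eq_sub_iff_add_eq, i_as_cast hiv, ← Nat.cast_add]
  by_cases hxH : x = ((H:ℕ) : ZMod m)
  · -- x = H: window 2sn+2
    subst hxH
    have hinG : ((Gg:ℕ) : ZMod m) ∈ sideInfo m s i :=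
      hin _ hGmem (cast_ne_of_ne (by omega) (by omega) (by omega))
    rw [mem_side hsm] at hinG hout
    set dG := (i - ((Gg:ℕ) : ZMod m)).val with hdG
    have hdlt : dG < m := ZMod.val_lt _
    rw [show (H:ℕ) = Gg + 1 by omega, val_anchor_add i Gg 1 (by omega) (by omega)] at hout
    have hde : dG = 0 := by
      by_cases hc : 1 ≤ dG
      · rw [if_pos hc] at hout; omega
      · omega
    have hiv : i.val = Gg + dG := val_of_anchor i Gg (by omega)
    have hv2 : i.val = 2*s*n + 2 := by omega
    rw [jmap_seam_eval hv2, if_pos (by omega), i_as_cast hiv,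
      show (H:ℕ) = (Gg + dG) + 1 by omega, Nat.cast_add, Nat.cast_one]
  · -- otherwise: A and H both inside, contradiction
    exfalso
    have hinA : ((A:ℕ) : ZMod m) ∈ sideInfo m s i := hin _ hAmem (Ne.symm hxA)
    have hinH : ((H:ℕ) : ZMod m) ∈ sideInfo m s i := hin _ hHmem (Ne.symm hxH)
    rw [mem_side hsm] at hinA hinH
    set dA := (i - ((A:ℕ) : ZMod m)).val with hdA
    have hdlt : dA < m := ZMod.val_lt _
    rw [show (H:ℕ) = A + s by omega, val_anchor_add i A s (by omega) (by omega)] at hinH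
    by_cases hc : s ≤ dA
    · rw [if_pos hc] at hinH; omega
    · rw [if_neg hc] at hinH; omega

end SeamCut
section Gadget

lemma card_pair_even {α : Type*} [DecidableEq α] {a b : α} (h : a ≠ b) :
    Even (({a, b} : Finset α).card) := by
  rw [Finset.card_pair h]; exact even_two

lemma gadget_aux {α : Type*} [DecidableEq α] (P Q : Finset α) (A : Set α) (j : α)
    (h1 : ∀ x ∈ P, x ∉ A → (∀ y ∈ P, y ≠ x → y ∈ A) → x = j)
    (h2 : ∀ x ∈ Q, x ∉ A → (∀ y ∈ Q, y ≠ x → y ∈ A) → x = j)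
    (h3 : ∀ x ∈ (P ∪ Q) \ (P ∩ Q), x ∉ A → (∀ y ∈ (P ∪ Q) \ (P ∩ Q), y ≠ x → y ∈ A) → x = j)
    (j' : α) (hj'P : j' ∈ P) (hj'A : j' ∉ A) (hne : j' ≠ j) :
    ∃ Φ : Finset α, j' ∈ Φ ∧ (∀ k ∈ Φ, k ∉ A ∧ k ∈ P ∪ Q) ∧
      Even ((Φ ∩ P).card) ∧ Even ((Φ ∩ Q).card) := by
  classical
  by_cases hj'Q : j' ∈ Q
  · -- j' is a shared point
    by_cases hsh : ∃ z ∈ P, z ∈ Q ∧ z ∉ A ∧ z ≠ j'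
    · obtain ⟨z, hzP, hzQ, hzA, hzj⟩ := hsh
      refine ⟨{j', z}, by simp, ?_, ?_, ?_⟩
      · intro k hk
        simp only [Finset.mem_insert, Finset.mem_singleton] at hk
        rcases hk with rfl | rfl
        · exact ⟨hj'A, Finset.mem_union_left _ hj'P⟩
        · exact ⟨hzA, Finset.mem_union_left _ hzP⟩
      · rw [Finset.insert_inter_of_mem hj'P, Finset.singleton_inter_of_mem hzP]
        exact card_pair_even (Ne.symm hzj)
      · rw [Finset.insert_inter_of_mem hj'Q, Finset.singleton_inter_of_mem hzQ]
        exact card_pair_even (Ne.symm hzj)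
    · -- no other shared outside point
      by_cases ho1 : ∃ z1 ∈ P, z1 ∉ A ∧ z1 ∉ Q
      · by_cases ho2 : ∃ z2 ∈ Q, z2 ∉ A ∧ z2 ∉ P
        · obtain ⟨z1, hz1P, hz1A, hz1Q⟩ := ho1
          obtain ⟨z2, hz2Q, hz2A, hz2P⟩ := ho2
          have hz1j : z1 ≠ j' := fun h => hz1Q (h ▸ hj'Q)
          have hz2j : z2 ≠ j' := fun h => hz2P (h ▸ hj'P)
          have hz12 : z1 ≠ z2 := fun h => hz2P (h ▸ hz1P)
          refine ⟨{j', z1, z2}, by simp, ?_, ?_, ?_⟩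
          · intro k hk
            simp only [Finset.mem_insert, Finset.mem_singleton] at hk
            rcases hk with rfl | rfl | rfl
            · exact ⟨hj'A, Finset.mem_union_left _ hj'P⟩
            · exact ⟨hz1A, Finset.mem_union_left _ hz1P⟩
            · exact ⟨hz2A, Finset.mem_union_right _ hz2Q⟩
          · rw [Finset.insert_inter_of_mem hj'P, Finset.insert_inter_of_mem hz1P,
              Finset.singleton_inter_of_notMem hz2P]
            rw [Finset.card_insert_of_notMem (by simp [Ne.symm hz1j]),
              Finset.card_insert_of_notMem (Finset.notMem_empty _), Finset.card_empty]
            exact even_two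
          · rw [Finset.insert_inter_of_mem hj'Q, Finset.insert_inter_of_notMem hz1Q,
              Finset.singleton_inter_of_mem hz2Q]
            exact card_pair_even (Ne.symm hz2j)
        · -- every outside point of Q is in P : Q's outside set is {j'}
          exfalso
          refine hne (h2 j' hj'Q hj'A ?_)
          intro y hyQ hyj
          by_contra hyA
          have hyP : y ∈ P := by
            by_contra hyP
            exact ho2 ⟨y, hyQ, hyA, hyP⟩
          exact hsh ⟨y, hyP, hyQ, hyA, hyj⟩
      · -- every outside point of P is in Q : P's outside set is {j'}
        exfalso
        refine hne (h1 j' hj'P hj'A ?_)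
        intro y hyP hyj
        by_contra hyA
        have hyQ : y ∈ Q := by
          by_contra hyQ
          exact ho1 ⟨y, hyP, hyA, hyQ⟩
        exact hsh ⟨y, hyP, hyQ, hyA, hyj⟩
  · -- j' in P only
    by_cases hz : ∃ z ∈ P, z ∉ A ∧ z ≠ j' ∧ z ∉ Q
    · obtain ⟨z, hzP, hzA, hzj, hzQ⟩ := hz
      refine ⟨{j', z}, by simp, ?_, ?_, ?_⟩
      · intro k hk
        simp only [Finset.mem_insert, Finset.mem_singleton] at hk
        rcases hk with rfl | rfl
        · exact ⟨hj'A, Finset.mem_union_left _ hj'P⟩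
        · exact ⟨hzA, Finset.mem_union_left _ hzP⟩
      · rw [Finset.insert_inter_of_mem hj'P, Finset.singleton_inter_of_mem hzP]
        exact card_pair_even (Ne.symm hzj)
      · rw [Finset.insert_inter_of_notMem hj'Q, Finset.singleton_inter_of_notMem hzQ]
        simp
    · by_cases hsh : ∃ z ∈ P, z ∉ A ∧ z ≠ j'
      · obtain ⟨zs, hzsP, hzsA, hzsj⟩ := hsh
        have hzsQ : zs ∈ Q := by
          by_contra hq
          exact hz ⟨zs, hzsP, hzsA, hzsj, hq⟩
        by_cases ho2 : ∃ z2 ∈ Q, z2 ∉ A ∧ z2 ∉ P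
        · obtain ⟨z2, hz2Q, hz2A, hz2P⟩ := ho2
          have hz2j : z2 ≠ j' := fun h => hz2P (h ▸ hj'P)
          have hz2zs : z2 ≠ zs := fun h => hz2P (h ▸ hzsP)
          refine ⟨{j', zs, z2}, by simp, ?_, ?_, ?_⟩
          · intro k hk
            simp only [Finset.mem_insert, Finset.mem_singleton] at hk
            rcases hk with rfl | rfl | rfl
            · exact ⟨hj'A, Finset.mem_union_left _ hj'P⟩
            · exact ⟨hzsA, Finset.mem_union_left _ hzsP⟩
            · exact ⟨hz2A, Finset.mem_union_right _ hz2Q⟩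
          · rw [Finset.insert_inter_of_mem hj'P, Finset.insert_inter_of_mem hzsP,
              Finset.singleton_inter_of_notMem hz2P]
            rw [Finset.card_insert_of_notMem (by simp [Ne.symm hzsj]),
              Finset.card_insert_of_notMem (Finset.notMem_empty _), Finset.card_empty]
            exact even_two
          · rw [Finset.insert_inter_of_notMem hj'Q, Finset.insert_inter_of_mem hzsQ,
              Finset.singleton_inter_of_mem hz2Q]
            exact card_pair_even hz2zs.symm
        · -- use the symmetric difference row
          exfalso
          have hj'D : j' ∈ (P ∪ Q) \ (P ∩ Q) := by
            rw [Finset.mem_sdiff, Finset.mem_union, Finset.mem_inter]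
            exact ⟨Or.inl hj'P, fun h => hj'Q h.2⟩
          refine hne (h3 j' hj'D hj'A ?_)
          intro y hyD hyj
          rw [Finset.mem_sdiff, Finset.mem_union, Finset.mem_inter] at hyD
          by_contra hyA
          rcases hyD.1 with hyP | hyQ
          · have hyQ : y ∈ Q := by
              by_contra hq
              exact hz ⟨y, hyP, hyA, hyj, hq⟩
            exact hyD.2 ⟨hyP, hyQ⟩
          · have hyP : y ∈ P := by
              by_contra hp
              exact ho2 ⟨y, hyQ, hyA, hp⟩
            exact hyD.2 ⟨hyP, hyQ⟩
      · -- P's outside set is {j'}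
        exfalso
        refine hne (h1 j' hj'P hj'A ?_)
        intro y hyP hyj
        by_contra hyA
        exact hsh ⟨y, hyP, hyA, hyj⟩

lemma gadget_cert {α : Type*} [DecidableEq α] (P Q : Finset α) (A : Set α) (j : α)
    (h1 : ∀ x ∈ P, x ∉ A → (∀ y ∈ P, y ≠ x → y ∈ A) → x = j)
    (h2 : ∀ x ∈ Q, x ∉ A → (∀ y ∈ Q, y ≠ x → y ∈ A) → x = j)
    (h3 : ∀ x ∈ (P ∪ Q) \ (P ∩ Q), x ∉ A → (∀ y ∈ (P ∪ Q) \ (P ∩ Q), y ≠ x → y ∈ A) → x = j)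
    (j' : α) (hj'PQ : j' ∈ P ∪ Q) (hj'A : j' ∉ A) (hne : j' ≠ j) :
    ∃ Φ : Finset α, j' ∈ Φ ∧ (∀ k ∈ Φ, k ∉ A ∧ k ∈ P ∪ Q) ∧
      Even ((Φ ∩ P).card) ∧ Even ((Φ ∩ Q).card) := by
  rcases Finset.mem_union.mp hj'PQ with hP | hQ
  · exact gadget_aux P Q A j h1 h2 h3 j' hP hj'A hne
  · have h3' : ∀ x ∈ (Q ∪ P) \ (Q ∩ P), x ∉ A →
        (∀ y ∈ (Q ∪ P) \ (Q ∩ P), y ≠ x → y ∈ A) → x = j := by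
      rw [Finset.union_comm, Finset.inter_comm]; exact h3
    obtain ⟨Φ, a, b, c, d⟩ := gadget_aux Q P A j h2 h1 h3' j' hQ hj'A hne
    refine ⟨Φ, a, ?_, d, c⟩
    intro k hk
    obtain ⟨hk1, hk2⟩ := b k hk
    exact ⟨hk1, by rwa [Finset.union_comm]⟩

end Gadget

section Span

variable {m s n r : ℕ} [NeZero m]

lemma add_self_fun (v : ZMod m → ZMod 2) : v + v = 0 := by
  funext x
  exact CharTwo.add_self_eq_zero _

lemma G_eq_sum (t : Fin (3*n+2)) :
    G m s n r t = ∑ y ∈ rowS m s n r t.val, Pi.single y (1 : ZMod 2) := by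
  funext x
  rw [Finset.sum_apply]
  simp only [Pi.single_apply]
  rw [Finset.sum_ite_eq (rowS m s n r t.val) x (fun _ => (1 : ZMod 2))]
  rfl

lemma decode_mem {i : ZMod m} {t : Fin (3*n+2)} {j : ZMod m}
    (hj : j ∈ rowS m s n r t.val)
    (hsub : ∀ y ∈ rowS m s n r t.val, y ≠ j → y ∈ sideInfo m s i)
    (hout : j ∉ sideInfo m s i) :
    j ∈ decSet m s (G m s n r) i := by
  refine ⟨hout, ?_⟩
  have h1 : ∑ y ∈ rowS m s n r t.val, Pi.single y (1:ZMod 2) =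
      Pi.single j (1:ZMod 2) + ∑ y ∈ (rowS m s n r t.val).erase j, Pi.single y (1:ZMod 2) :=
    (Finset.add_sum_erase _ _ hj).symm
  have hsum : Pi.single j (1:ZMod 2) =
      G m s n r t + ∑ y ∈ (rowS m s n r t.val).erase j, Pi.single y (1:ZMod 2) := by
    rw [G_eq_sum, h1, add_assoc, add_self_fun, add_zero]
  rw [hsum]
  apply Submodule.add_mem
  · exact Submodule.subset_span (Or.inl ⟨t, rfl⟩)
  · apply Submodule.sum_mem
    intro y hy
    have hy' := Finset.mem_of_mem_erase hy
    have hyne := Finset.ne_of_mem_erase hy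
    exact Submodule.subset_span (Or.inr ⟨y, hsub y hy' hyne, rfl⟩)

lemma not_decodable {i : ZMod m} {j' : ZMod m} (Φ : Finset (ZMod m))
    (hj : j' ∈ Φ) (hA : ∀ k ∈ Φ, k ∉ sideInfo m s i)
    (heven : ∀ t : Fin (3*n+2), Even ((Φ ∩ rowS m s n r t.val).card)) :
    Pi.single j' (1:ZMod 2) ∉ Submodule.span (ZMod 2)
      (Set.range (G m s n r) ∪ {v | ∃ k ∈ sideInfo m s i, v = Pi.single k (1:ZMod 2)}) := by
  intro hmem
  classical
  set φ : (ZMod m → ZMod 2) →ₗ[ZMod 2] ZMod 2 :=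
    ∑ k ∈ Φ, LinearMap.proj k with hφ
  have hφ_apply : ∀ v : ZMod m → ZMod 2, φ v = ∑ k ∈ Φ, v k := by
    intro v; simp [hφ]
  have hgen : ∀ v ∈ (Set.range (G m s n r) ∪
      {v | ∃ k ∈ sideInfo m s i, v = Pi.single k (1:ZMod 2)}), φ v = 0 := by
    rintro v (⟨t, rfl⟩ | ⟨k, hk, rfl⟩)
    · rw [hφ_apply]
      have hterm : ∀ k ∈ Φ, G m s n r t k = if k ∈ rowS m s n r t.val then (1:ZMod 2) else 0 :=
        fun _ _ => rfl
      rw [Finset.sum_congr rfl hterm, Finset.sum_boole, Finset.filter_mem_eq_inter]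
      obtain ⟨c, hc⟩ := heven t
      rw [hc]
      push_cast
      exact CharTwo.add_self_eq_zero _
    · rw [hφ_apply]
      have hterm : ∀ x ∈ Φ, Pi.single (M := fun _ : ZMod m => ZMod 2) k 1 x = 0 := by
        intro x hx
        have hxk : x ≠ k := fun h => hA x hx (h ▸ hk)
        simp [Pi.single_apply, hxk]
      rw [Finset.sum_congr rfl hterm, Finset.sum_const_zero]
  have hker : Submodule.span (ZMod 2) (Set.range (G m s n r) ∪
      {v | ∃ k ∈ sideInfo m s i, v = Pi.single k (1:ZMod 2)}) ≤ LinearMap.ker φ :=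
    Submodule.span_le.mpr fun v hv => hgen v hv
  have h0 : φ (Pi.single j' 1) = 0 := hker hmem
  rw [hφ_apply] at h0
  have h1 : ∑ k ∈ Φ, Pi.single j' (1:ZMod 2) k = 1 := by
    simp only [Pi.single_apply]
    rw [Finset.sum_ite_eq' Φ j' (fun _ => (1:ZMod 2)), if_pos hj]
  rw [h1] at h0
  exact one_ne_zero h0

end Span
section Correct

variable {m s n r : ℕ} [NeZero m]

lemma diff_val_wrap {i : ZMod m} (q d : ℕ) (hq : q + d = m + i.val) (hdm : d < m) :
    (i - (q:ZMod m)).val = d := by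
  have h1 : ((q:ℕ):ZMod m) + ((d:ℕ):ZMod m) = i := by
    have h2 : ((q + d : ℕ) : ZMod m) = ((i.val : ℕ) : ZMod m) := by
      rw [hq]; push_cast [ZMod.natCast_self]; ring
    rw [← Nat.cast_add, h2, cast_val_eq]
  have h3 : i - (q:ZMod m) = ((d:ℕ):ZMod m) := by rw [← h1]; ring
  rw [h3, ZMod.val_cast_of_lt hdm]

lemma in_side (hsm : s < m) {i : ZMod m} {q d : ℕ} (hd : d < s)
    (h : i.val = q + d) (hm : q + d < m) : ((q:ℕ):ZMod m) ∈ sideInfo m s i := by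
  rw [mem_side hsm, sub_anchor_val q d hm h]; exact hd

lemma in_side_wrap (hsm : s < m) {i : ZMod m} {q d : ℕ} (hd : d < s)
    (h : q + d = m + i.val) : ((q:ℕ):ZMod m) ∈ sideInfo m s i := by
  rw [mem_side hsm, diff_val_wrap q d h (by omega)]; exact hd

lemma out_side (hsm : s < m) {i : ZMod m} {q d : ℕ} (hd : s ≤ d)
    (h : i.val = q + d) (hm : q + d < m) : ((q:ℕ):ZMod m) ∉ sideInfo m s i := by
  rw [mem_side hsm, sub_anchor_val q d hm h]; omega

lemma out_side_wrap (hsm : s < m) {i : ZMod m} {q d : ℕ} (hd : s ≤ d) (hdm : d < m)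
    (h : q + d = m + i.val) : ((q:ℕ):ZMod m) ∉ sideInfo m s i := by
  rw [mem_side hsm, diff_val_wrap q d h hdm]; omega

lemma jmap_mem_decSet (hs : 5 ≤ s) (hr4 : 4 ≤ r) (hrs : r ≤ s) (hn : 1 ≤ n)
    (hmeq : m = 2*s*n+r) (i : ZMod m) :
    jmap m s n i ∈ decSet m s (G m s n r) i := by
  have h2s := two_s_le (s := s) (n := n) hn
  have hsm : s < m := by omega
  have hvm : i.val < m := ZMod.val_lt i
  by_cases hblk : i.val < 2*s*n
  · -- block windows
    obtain ⟨u, w, hw, hveq, hu⟩ : ∃ u w, w < 2*s ∧ i.val = 2*s*u + w ∧ u < n :=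
      ⟨i.val / (2*s), i.val % (2*s), Nat.mod_lt _ (by omega),
        (Nat.div_add_mod _ _).symm, Nat.div_lt_of_lt_mul (by omega)⟩
    have hbd := mul_bound (n := n) (s := s) hu
    set p := 2*s*u with hp
    have hiq : i = ((p + w : ℕ) : ZMod m) := i_as_cast hveq
    by_cases hw0 : w = 0
    · -- window 2su : row A_u decodes p+1
      subst hw0
      have hjm : jmap m s n i = ((p+1 : ℕ) : ZMod m) := by
        rw [jmap_block_eval hu hw hveq, if_pos (by omega), hiq]
        push_cast
        ring
      have hrow : rowS m s n r (3*u) = {((p:ℕ) : ZMod m), ((p+1:ℕ) : ZMod m)} := by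
        rw [rowS, natRow_blockA hu, Finset.image_insert, Finset.image_singleton]
      rw [hjm]
      refine decode_mem (t := ⟨3*u, by omega⟩) ?_ ?_ ?_
      · rw [hrow]; simp
      · intro y hy hyne
        rw [hrow] at hy
        simp only [Finset.mem_insert, Finset.mem_singleton] at hy
        rcases hy with rfl | rfl
        · exact in_side hsm (d := 0) (by omega) (by omega) (by omega)
        · exact absurd rfl hyne
      · exact out_side_wrap hsm (d := m-1) (by omega) (by omega) (by omega)
    · by_cases hw1 : w = 1
      · subst hw1
        by_cases hu0 : u = 0
        · -- window 1 : row R2 decodes E = m+1-s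
          subst hu0
          have hv1 : i.val = 1 := by omega
          set E := 2*s*n+r+1-s with hE
          set F := 2*s*n+r+2-s with hF
          have hjm : jmap m s n i = ((E : ℕ) : ZMod m) := by
            rw [jmap_block_eval hu hw hveq, if_neg (by omega), if_pos (by omega),
              sub_eq_iff_eq_add, hiq, ← Nat.cast_add,
              show (E + s : ℕ) = m + 1 by omega]
            push_cast [ZMod.natCast_self]
            simp [hp]
          have hrow : rowS m s n r (3*n+1) = {((E:ℕ) : ZMod m), ((F:ℕ) : ZMod m),
              ((2*s*n+2:ℕ) : ZMod m), ((2*s*n+3:ℕ) : ZMod m)} := by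
            rw [rowS, natRow_R2, Finset.image_insert, Finset.image_insert,
              Finset.image_insert, Finset.image_singleton]
          rw [hjm]
          refine decode_mem (t := ⟨3*n+1, by omega⟩) ?_ ?_ ?_
          · rw [hrow]; simp
          · intro y hy hyne
            rw [hrow] at hy
            simp only [Finset.mem_insert, Finset.mem_singleton] at hy
            rcases hy with rfl | rfl | rfl | rfl
            · exact absurd rfl hyne
            · exact in_side_wrap hsm (show s-1 < s by omega) (by omega)
            · exact in_side_wrap hsm (show r-1 < s by omega) (by omega)
            · exact in_side_wrap hsm (show r-2 < s by omega) (by omega)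
          · exact out_side_wrap hsm (le_refl s) (by omega) (by omega)
        · -- window 2su+1, u ≥ 1 : row C_{u-1} decodes 2su-s+1
          obtain ⟨u', rfl⟩ : ∃ u', u = u' + 1 := ⟨u - 1, by omega⟩
          have hu' : u' < n := by omega
          set q := 2*s*u' with hq
          have hpq : p = q + 2*s := by rw [hp, hq]; ring
          have hjm : jmap m s n i = ((q+s+1 : ℕ) : ZMod m) := by
            rw [jmap_block_eval hu hw hveq, if_neg (by omega), if_pos (by omega),
              sub_eq_iff_eq_add, hiq, ← Nat.cast_add]
            congr 1
            omega
          have hrow : rowS m s n r (3*u'+2) = {((q+s+1:ℕ) : ZMod m), ((q+s+2:ℕ) : ZMod m)} := by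
            rw [rowS, natRow_blockC hu', Finset.image_insert, Finset.image_singleton]
          rw [hjm]
          refine decode_mem (t := ⟨3*u'+2, by omega⟩) ?_ ?_ ?_
          · rw [hrow]; simp
          · intro y hy hyne
            rw [hrow] at hy
            simp only [Finset.mem_insert, Finset.mem_singleton] at hy
            rcases hy with rfl | rfl
            · exact absurd rfl hyne
            · exact in_side hsm (show s-1 < s by omega) (by omega) (by omega)
          · exact out_side hsm (le_refl s) (by omega) (by omega)
      · by_cases hws : w < s
        · -- window p+w, 2 ≤ w ≤ s-1 : row B_u decodes p+s
          have hw2 : 2 ≤ w := by omega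
          have hjm : jmap m s n i = ((p+s : ℕ) : ZMod m) := by
            rw [jmap_block_eval hu hw hveq, if_neg (by omega), if_neg (by omega),
              if_pos hws, hiq, ← Nat.cast_add]
            congr 1
            omega
          have hrow : rowS m s n r (3*u+1) = {((p+2:ℕ) : ZMod m), ((p+s:ℕ) : ZMod m)} := by
            rw [rowS, natRow_blockB hu, Finset.image_insert, Finset.image_singleton]
          rw [hjm]
          refine decode_mem (t := ⟨3*u+1, by omega⟩) ?_ ?_ ?_
          · rw [hrow]; simp
          · intro y hy hyne
            rw [hrow] at hy
            simp only [Finset.mem_insert, Finset.mem_singleton] at hy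
            rcases hy with rfl | rfl
            · exact in_side hsm (show w-2 < s by omega) (by omega) (by omega)
            · exact absurd rfl hyne
          · exact out_side_wrap hsm (show s ≤ m-s+w by omega) (by omega) (by omega)
        · by_cases hwse : w = s
          · -- window p+s : row A_u decodes p
            have hjm : jmap m s n i = ((p : ℕ) : ZMod m) := by
              rw [jmap_block_eval hu hw hveq, if_neg (by omega), if_pos (by omega),
                sub_eq_iff_eq_add, hiq, ← Nat.cast_add]
              congr 1
              omega
            have hrow : rowS m s n r (3*u) = {((p:ℕ) : ZMod m), ((p+1:ℕ) : ZMod m)} := by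
              rw [rowS, natRow_blockA hu, Finset.image_insert, Finset.image_singleton]
            rw [hjm]
            refine decode_mem (t := ⟨3*u, by omega⟩) ?_ ?_ ?_
            · rw [hrow]; simp
            · intro y hy hyne
              rw [hrow] at hy
              simp only [Finset.mem_insert, Finset.mem_singleton] at hy
              rcases hy with rfl | rfl
              · exact absurd rfl hyne
              · exact in_side hsm (show s-1 < s by omega) (by omega) (by omega)
            · exact out_side hsm (le_refl s) (by omega) (by omega)
          · by_cases hws1 : w = s+1
            · -- window p+s+1 : row C_u decodes p+s+2
              subst hws1
              have hjm : jmap m s n i = ((p+s+2 : ℕ) : ZMod m) := by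
                rw [jmap_block_eval hu hw hveq, if_pos (by omega), hiq]
                push_cast
                ring
              have hrow : rowS m s n r (3*u+2) = {((p+s+1:ℕ) : ZMod m), ((p+s+2:ℕ) : ZMod m)} := by
                rw [rowS, natRow_blockC hu, Finset.image_insert, Finset.image_singleton]
              rw [hjm]
              refine decode_mem (t := ⟨3*u+2, by omega⟩) ?_ ?_ ?_
              · rw [hrow]; simp
              · intro y hy hyne
                rw [hrow] at hy
                simp only [Finset.mem_insert, Finset.mem_singleton] at hy
                rcases hy with rfl | rfl
                · exact in_side hsm (show 0 < s by omega) (by omega) (by omega)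
                · exact absurd rfl hyne
              · exact out_side_wrap hsm (show s ≤ m-1 by omega) (by omega) (by omega)
            · -- window p+w, s+2 ≤ w ≤ 2s-1 : row B_u decodes p+2
              have hw2 : s+2 ≤ w := by omega
              have hjm : jmap m s n i = ((p+2 : ℕ) : ZMod m) := by
                rw [jmap_block_eval hu hw hveq, if_neg (by omega), if_neg (by omega),
                  if_neg (by omega), sub_eq_iff_eq_add, hiq, ← Nat.cast_add]
                congr 1
                omega
              have hrow : rowS m s n r (3*u+1) = {((p+2:ℕ) : ZMod m), ((p+s:ℕ) : ZMod m)} := by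
                rw [rowS, natRow_blockB hu, Finset.image_insert, Finset.image_singleton]
              rw [hjm]
              refine decode_mem (t := ⟨3*u+1, by omega⟩) ?_ ?_ ?_
              · rw [hrow]; simp
              · intro y hy hyne
                rw [hrow] at hy
                simp only [Finset.mem_insert, Finset.mem_singleton] at hy
                rcases hy with rfl | rfl
                · exact absurd rfl hyne
                · exact in_side hsm (show w-s < s by omega) (by omega) (by omega)
              · exact out_side hsm (show s ≤ w-2 by omega) (by omega) (by omega)
  · -- seam windows
    obtain ⟨o, ho, hveq⟩ : ∃ o, o < r ∧ i.val = 2*s*n + o := ⟨i.val - 2*s*n, by omega, by omega⟩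
    have hiq : i = ((2*s*n + o : ℕ) : ZMod m) := i_as_cast hveq
    set A := 2*s*n+3-s with hA
    set B := 2*s*n+r-s with hB
    set E := 2*s*n+r+1-s with hE
    set F := 2*s*n+r+2-s with hF
    have hrow1 : rowS m s n r (3*n) = {((A:ℕ) : ZMod m), ((B:ℕ) : ZMod m),
        ((2*s*n:ℕ) : ZMod m), ((2*s*n+1:ℕ) : ZMod m)} := by
      rw [rowS, natRow_R1, Finset.image_insert, Finset.image_insert, Finset.image_insert,
        Finset.image_singleton]
    have hrow2 : rowS m s n r (3*n+1) = {((E:ℕ) : ZMod m), ((F:ℕ) : ZMod m),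
        ((2*s*n+2:ℕ) : ZMod m), ((2*s*n+3:ℕ) : ZMod m)} := by
      rw [rowS, natRow_R2, Finset.image_insert, Finset.image_insert, Finset.image_insert,
        Finset.image_singleton]
    by_cases ho0 : o = 0
    · -- window 2sn : row R1 decodes 2sn+1
      subst ho0
      have hjm : jmap m s n i = ((2*s*n+1 : ℕ) : ZMod m) := by
        rw [jmap_seam_eval hveq, if_pos (by omega), hiq]
        push_cast
        ring
      rw [hjm]
      refine decode_mem (t := ⟨3*n, by omega⟩) ?_ ?_ ?_
      · rw [hrow1]; simp
      · intro y hy hyne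
        rw [hrow1] at hy
        simp only [Finset.mem_insert, Finset.mem_singleton] at hy
        rcases hy with rfl | rfl | rfl | rfl
        · exact in_side hsm (show s-3 < s by omega) (by omega) (by omega)
        · exact in_side hsm (show s-r < s by omega) (by omega) (by omega)
        · exact in_side hsm (show 0 < s by omega) (by omega) (by omega)
        · exact absurd rfl hyne
      · exact out_side_wrap hsm (show s ≤ m-1 by omega) (by omega) (by omega)
    · by_cases ho1 : o = 1
      · -- window 2sn+1 : row C_{n-1} decodes 2sn-s+1
        subst ho1
        obtain ⟨n', rfl⟩ : ∃ n', n = n' + 1 := ⟨n - 1, by omega⟩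
        have hn' : n' < n' + 1 := by omega
        set q := 2*s*n' with hq
        have hexp : 2*s*(n'+1) = q + 2*s := by rw [hq]; ring
        have hjm : jmap m s (n'+1) i = ((q+s+1 : ℕ) : ZMod m) := by
          rw [jmap_seam_eval hveq, if_neg (by omega), if_pos (by omega),
            sub_eq_iff_eq_add, hiq, ← Nat.cast_add]
          congr 1
          omega
        have hrow : rowS m s (n'+1) r (3*n'+2) = {((q+s+1:ℕ) : ZMod m), ((q+s+2:ℕ) : ZMod m)} := by
          rw [rowS, natRow_blockC hn', Finset.image_insert, Finset.image_singleton]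
        rw [hjm]
        refine decode_mem (t := ⟨3*n'+2, by omega⟩) ?_ ?_ ?_
        · rw [hrow]; simp
        · intro y hy hyne
          rw [hrow] at hy
          simp only [Finset.mem_insert, Finset.mem_singleton] at hy
          rcases hy with rfl | rfl
          · exact absurd rfl hyne
          · exact in_side hsm (show s-1 < s by omega) (by omega) (by omega)
        · exact out_side hsm (le_refl s) (by omega) (by omega)
      · by_cases ho2 : o = 2
        · -- window 2sn+2 : row R2 decodes 2sn+3
          subst ho2
          have hjm : jmap m s n i = ((2*s*n+3 : ℕ) : ZMod m) := by
            rw [jmap_seam_eval hveq, if_pos (by omega), hiq]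
            push_cast
            ring
          rw [hjm]
          refine decode_mem (t := ⟨3*n+1, by omega⟩) ?_ ?_ ?_
          · rw [hrow2]; simp
          · intro y hy hyne
            rw [hrow2] at hy
            simp only [Finset.mem_insert, Finset.mem_singleton] at hy
            rcases hy with rfl | rfl | rfl | rfl
            · exact in_side hsm (show s+1-r < s by omega) (by omega) (by omega)
            · exact in_side hsm (show s-r < s by omega) (by omega) (by omega)
            · exact in_side hsm (show 0 < s by omega) (by omega) (by omega)
            · exact absurd rfl hyne
          · exact out_side_wrap hsm (show s ≤ m-1 by omega) (by omega) (by omega)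
        · -- window 2sn+o, 3 ≤ o ≤ r-1 : row R1 decodes A
          have ho3 : 3 ≤ o := by omega
          have hjm : jmap m s n i = ((A : ℕ) : ZMod m) := by
            rw [jmap_seam_eval hveq, if_neg (by omega), if_neg (by omega),
              sub_eq_iff_eq_add, hiq, ← Nat.cast_add]
            congr 1
            omega
          rw [hjm]
          refine decode_mem (t := ⟨3*n, by omega⟩) ?_ ?_ ?_
          · rw [hrow1]; simp
          · intro y hy hyne
            rw [hrow1] at hy
            simp only [Finset.mem_insert, Finset.mem_singleton] at hy
            rcases hy with rfl | rfl | rfl | rfl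
            · exact absurd rfl hyne
            · exact in_side hsm (show s-r+o < s by omega) (by omega) (by omega)
            · exact in_side hsm (show o < s by omega) (by omega) (by omega)
            · exact in_side hsm (show o-1 < s by omega) (by omega) (by omega)
          · exact out_side hsm (show s ≤ s+o-3 by omega) (by omega) (by omega)

end Correct
section Secure

variable {m s n r : ℕ} [NeZero m]

lemma all_out {S : Finset (ZMod m)} {i j' : ZMod m} (hcut : CutHyp m s n r S)
    (hj : j' ∈ S) (hout : j' ∉ sideInfo m s i) (hne : j' ≠ jmap m s n i)
    (hpair : ∀ y ∈ S, y ≠ j' → ∀ z ∈ S, z ≠ j' → y = z) :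
    ∀ k ∈ S, k ∉ sideInfo m s i := by
  intro k hk hkA
  have hkj : k ≠ j' := fun h => hout (h ▸ hkA)
  refine hne (hcut i j' hj hout ?_)
  intro y hy hyne
  rw [hpair y hy hyne k hk hkj]
  exact hkA

lemma sec_unique (hs : 5 ≤ s) (hr4 : 4 ≤ r) (hrs : r ≤ s) (hn : 1 ≤ n)
    (hmeq : m = 2*s*n+r) (i : ZMod m) :
    ∀ j' ∈ decSet m s (G m s n r) i, j' = jmap m s n i := by
  classical
  intro j' hj'
  obtain ⟨hout, hspan⟩ := hj'
  by_contra hne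
  have h2s := two_s_le (s := s) (n := n) hn
  have hsm : s < m := by omega
  suffices hΦ : ∃ Φ : Finset (ZMod m), j' ∈ Φ ∧ (∀ k ∈ Φ, k ∉ sideInfo m s i) ∧
      ∀ t : Fin (3*n+2), Even ((Φ ∩ rowS m s n r t.val).card) by
    obtain ⟨Φ, h1, h2, h3⟩ := hΦ
    exact not_decodable Φ h1 h2 h3 hspan
  by_cases hex : ∃ t : Fin (3*n+2), j' ∈ rowS m s n r t.val
  · obtain ⟨t, ht⟩ := hex
    have htlt : t.val < 3*n+2 := t.isLt
    by_cases htb : t.val < 3*n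
    · -- block row : Φ is the row itself
      obtain ⟨u, hu, hpat⟩ : ∃ u, u < n ∧ (t.val = 3*u ∨ t.val = 3*u+1 ∨ t.val = 3*u+2) :=
        ⟨t.val/3, by omega, by omega⟩
      have hbd := mul_bound (n := n) (s := s) hu
      obtain ⟨q1, q2, hq1, hq2, hqne, hrow, hcut⟩ :
          ∃ q1 q2 : ℕ, q1 < m ∧ q2 < m ∧ q1 ≠ q2 ∧
            rowS m s n r t.val = {((q1:ℕ) : ZMod m), ((q2:ℕ) : ZMod m)} ∧
            CutHyp m s n r (rowS m s n r t.val) := by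
        rcases hpat with hp | hp | hp
        · refine ⟨2*s*u, 2*s*u+1, by omega, by omega, by omega, ?_, ?_⟩
          · rw [hp, rowS, natRow_blockA hu, Finset.image_insert, Finset.image_singleton]
          · rw [hp]; exact cut_blockA hs hr4 hrs hn hmeq hu
        · refine ⟨2*s*u+2, 2*s*u+s, by omega, by omega, by omega, ?_, ?_⟩
          · rw [hp, rowS, natRow_blockB hu, Finset.image_insert, Finset.image_singleton]
          · rw [hp]; exact cut_blockB hs hr4 hrs hn hmeq hu
        · refine ⟨2*s*u+s+1, 2*s*u+s+2, by omega, by omega, by omega, ?_, ?_⟩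
          · rw [hp, rowS, natRow_blockC hu, Finset.image_insert, Finset.image_singleton]
          · rw [hp]; exact cut_blockC hs hr4 hrs hn hmeq hu
      have hcastne : ((q1:ℕ) : ZMod m) ≠ ((q2:ℕ) : ZMod m) := cast_ne_of_ne hq1 hq2 hqne
      have hpair : ∀ y ∈ rowS m s n r t.val, y ≠ j' → ∀ z ∈ rowS m s n r t.val, z ≠ j' → y = z := by
        intro y hy hyj z hz hzj
        rw [hrow] at hy hz ht
        simp only [Finset.mem_insert, Finset.mem_singleton] at hy hz ht
        rcases ht with rfl | rfl
        · rcases hy with rfl | rfl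
          · exact absurd rfl hyj
          · rcases hz with rfl | rfl
            · exact absurd rfl hzj
            · rfl
        · rcases hy with rfl | rfl
          · rcases hz with rfl | rfl
            · rfl
            · exact absurd rfl hzj
          · exact absurd rfl hyj
      have hall := all_out hcut ht hout hne hpair
      refine ⟨rowS m s n r t.val, ht, hall, ?_⟩
      intro t'
      by_cases heq : t'.val = t.val
      · rw [heq, Finset.inter_self, hrow, Finset.card_pair hcastne]
        exact even_two
      · have hdisj : Disjoint (rowS m s n r t.val) (rowS m s n r t'.val) :=
          rowS_disj htlt t'.isLt (fun h => heq h.symm) (Or.inl htb) hs hr4 hrs hn hmeq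
        rw [Finset.disjoint_iff_inter_eq_empty.mp hdisj, Finset.card_empty]
        exact Even.zero
    · -- seam rows : use the gadget certificate
      have htv : t.val = 3*n ∨ t.val = 3*n+1 := by omega
      have hj'U : j' ∈ rowS m s n r (3*n) ∪ rowS m s n r (3*n+1) := by
        rcases htv with h | h
        · exact Finset.mem_union_left _ (h ▸ ht)
        · exact Finset.mem_union_right _ (h ▸ ht)
      obtain ⟨Φ, hΦ1, hΦ2, hΦ3, hΦ4⟩ :=
        gadget_cert (rowS m s n r (3*n)) (rowS m s n r (3*n+1)) (sideInfo m s i)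
          (jmap m s n i)
          (fun x hx hxA hinx => cut_R1 hs hr4 hrs hn hmeq i x hx hxA hinx)
          (fun x hx hxA hinx => cut_R2 hs hr4 hrs hn hmeq i x hx hxA hinx)
          (fun x hx hxA hinx => cut_Delta hs hr4 hrs hn hmeq i x hx hxA hinx)
          j' hj'U hout hne
      refine ⟨Φ, hΦ1, fun k hk => (hΦ2 k hk).1, ?_⟩
      intro t'
      have ht' : t'.val < 3*n+2 := t'.isLt
      by_cases h1 : t'.val = 3*n
      · rw [h1]; exact hΦ3
      · by_cases h2 : t'.val = 3*n+1
        · rw [h2]; exact hΦ4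
        · have htb' : t'.val < 3*n := by omega
          have hempty : Φ ∩ rowS m s n r t'.val = ∅ := by
            apply Finset.eq_empty_of_forall_notMem
            intro k hk
            rw [Finset.mem_inter] at hk
            obtain ⟨hkΦ, hkrow⟩ := hk
            rcases Finset.mem_union.mp (hΦ2 k hkΦ).2 with hkP | hkQ
            · exact (Finset.disjoint_left.mp (rowS_disj (by omega) ht' (by omega)
                (Or.inr htb') hs hr4 hrs hn hmeq) hkP) hkrow
            · exact (Finset.disjoint_left.mp (rowS_disj (by omega) ht' (by omega)
                (Or.inr htb') hs hr4 hrs hn hmeq) hkQ) hkrow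
          rw [hempty, Finset.card_empty]
          exact Even.zero
  · -- j' in no row : Φ = {j'}
    refine ⟨{j'}, Finset.mem_singleton_self j', ?_, ?_⟩
    · intro k hk
      rw [Finset.mem_singleton] at hk
      exact hk ▸ hout
    · intro t
      have : ({j'} : Finset (ZMod m)) ∩ rowS m s n r t.val = ∅ := by
        apply Finset.eq_empty_of_forall_notMem
        intro k hk
        rw [Finset.mem_inter, Finset.mem_singleton] at hk
        exact hex ⟨t, hk.1 ▸ hk.2⟩
      rw [this, Finset.card_empty]
      exact Even.zero

end Secure

section Assemble

variable {m s n r : ℕ} [NeZero m]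

lemma decentralized (hs : 5 ≤ s) (hr4 : 4 ≤ r) (hrs : r ≤ s) (hn : 1 ≤ n)
    (hmeq : m = 2*s*n+r) :
    IsDecentralizedCode m s (G m s n r) := by
  intro t
  have h2s := two_s_le (s := s) (n := n) hn
  have hsm : s < m := by omega
  have htlt : t.val < 3*n+2 := t.isLt
  -- the user : the maximal point of the row
  by_cases htb : t.val < 3*n
  · obtain ⟨u, hu, hpat⟩ : ∃ u, u < n ∧ (t.val = 3*u ∨ t.val = 3*u+1 ∨ t.val = 3*u+2) :=
      ⟨t.val/3, by omega, by omega⟩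
    have hbd := mul_bound (n := n) (s := s) hu
    rcases hpat with hp | hp | hp
    · refine ⟨((2*s*u+1 : ℕ) : ZMod m), ?_⟩
      intro x hx
      have hxr : x ∈ rowS m s n r t.val := by
        by_contra hc
        exact hx (by simp [G, hc])
      rw [hp, rowS, natRow_blockA hu, Finset.image_insert, Finset.image_singleton] at hxr
      simp only [Finset.mem_insert, Finset.mem_singleton] at hxr
      have hval : ((2*s*u+1 : ℕ) : ZMod m).val = (2*s*u) + 1 := ZMod.val_cast_of_lt (by omega)
      rcases hxr with rfl | rfl
      · exact in_side hsm (show 1 < s by omega) hval (by omega)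
      · exact in_side hsm (show 0 < s by omega) (by omega) (by omega)
    · refine ⟨((2*s*u+s : ℕ) : ZMod m), ?_⟩
      intro x hx
      have hxr : x ∈ rowS m s n r t.val := by
        by_contra hc
        exact hx (by simp [G, hc])
      rw [hp, rowS, natRow_blockB hu, Finset.image_insert, Finset.image_singleton] at hxr
      simp only [Finset.mem_insert, Finset.mem_singleton] at hxr
      have hval : ((2*s*u+s : ℕ) : ZMod m).val = (2*s*u+2) + (s-2) := by
        rw [ZMod.val_cast_of_lt (by omega)]; omega
      rcases hxr with rfl | rfl
      · exact in_side hsm (show s-2 < s by omega) hval (by omega)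
      · exact in_side hsm (show 0 < s by omega) (by rw [ZMod.val_cast_of_lt (by omega)]; omega) (by omega)
    · refine ⟨((2*s*u+s+2 : ℕ) : ZMod m), ?_⟩
      intro x hx
      have hxr : x ∈ rowS m s n r t.val := by
        by_contra hc
        exact hx (by simp [G, hc])
      rw [hp, rowS, natRow_blockC hu, Finset.image_insert, Finset.image_singleton] at hxr
      simp only [Finset.mem_insert, Finset.mem_singleton] at hxr
      have hval : ((2*s*u+s+2 : ℕ) : ZMod m).val = (2*s*u+s+1) + 1 := by
        rw [ZMod.val_cast_of_lt (by omega)]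
      rcases hxr with rfl | rfl
      · exact in_side hsm (show 1 < s by omega) hval (by omega)
      · exact in_side hsm (show 0 < s by omega) (by rw [ZMod.val_cast_of_lt (by omega)]) (by omega)
  · have htv : t.val = 3*n ∨ t.val = 3*n+1 := by omega
    rcases htv with hp | hp
    · refine ⟨((2*s*n+1 : ℕ) : ZMod m), ?_⟩
      intro x hx
      have hxr : x ∈ rowS m s n r t.val := by
        by_contra hc
        exact hx (by simp [G, hc])
      rw [hp, rowS, natRow_R1, Finset.image_insert, Finset.image_insert, Finset.image_insert,
        Finset.image_singleton] at hxr
      simp only [Finset.mem_insert, Finset.mem_singleton] at hxr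
      have hval : ((2*s*n+1 : ℕ) : ZMod m).val = 2*s*n+1 := ZMod.val_cast_of_lt (by omega)
      rcases hxr with rfl | rfl | rfl | rfl
      · exact in_side hsm (show s-2 < s by omega) (by omega) (by omega)
      · exact in_side hsm (show s+1-r < s by omega) (by omega) (by omega)
      · exact in_side hsm (show 1 < s by omega) (by omega) (by omega)
      · exact in_side hsm (show 0 < s by omega) (by omega) (by omega)
    · refine ⟨((2*s*n+3 : ℕ) : ZMod m), ?_⟩
      intro x hx
      have hxr : x ∈ rowS m s n r t.val := by
        by_contra hc
        exact hx (by simp [G, hc])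
      rw [hp, rowS, natRow_R2, Finset.image_insert, Finset.image_insert, Finset.image_insert,
        Finset.image_singleton] at hxr
      simp only [Finset.mem_insert, Finset.mem_singleton] at hxr
      have hval : ((2*s*n+3 : ℕ) : ZMod m).val = 2*s*n+3 := ZMod.val_cast_of_lt (by omega)
      rcases hxr with rfl | rfl | rfl | rfl
      · exact in_side hsm (show s+2-r < s by omega) (by omega) (by omega)
      · exact in_side hsm (show s+1-r < s by omega) (by omega) (by omega)
      · exact in_side hsm (show 1 < s by omega) (by omega) (by omega)
      · exact in_side hsm (show 0 < s by omega) (by omega) (by omega)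

end Assemble

end SecProof

theorem feasible_mod_four_to_s (m s : ℕ) (hs : 5 ≤ s) (hm : 2 * s < m)
    (hlo : 4 ≤ m % (2 * s)) (hhi : m % (2 * s) ≤ s) :
    ∃ G : Fin (3 * (m - m % (2 * s)) / (2 * s) + 2) → ZMod m → ZMod 2,
      IsDecentralizedCode m s G ∧ Correct m s G ∧ Secure m s G := by
  haveI : NeZero m := ⟨by omega⟩
  set r := m % (2 * s) with hr
  set n := m / (2 * s) with hn_def
  have hdm : 2*s*n + r = m := by rw [hn_def, hr]; exact Nat.div_add_mod m (2*s)
  have hmeq : m = 2*s*n + r := hdm.symm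
  have hn : 1 ≤ n := by
    rw [hn_def]
    exact Nat.one_le_div_iff (by omega) |>.mpr (by omega)
  have hlen : 3 * (m - m % (2 * s)) / (2 * s) + 2 = 3*n + 2 := by
    have h1 : m - m % (2*s) = 2*s*n := by omega
    rw [← hr, h1, show 3*(2*s*n) = 2*s*(3*n) by ring, Nat.mul_div_cancel_left _ (by omega)]
  rw [hlen]
  refine ⟨SecProof.G m s n r, SecProof.decentralized hs hlo hhi hn hmeq, ?_, ?_⟩
  · intro i
    exact ⟨SecProof.jmap m s n i, SecProof.jmap_mem_decSet hs hlo hhi hn hmeq i⟩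
  · intro i j1 h1 j2 h2
    rw [SecProof.sec_unique hs hlo hhi hn hmeq i j1 h1, SecProof.sec_unique hs hlo hhi hn hmeq i j2 h2]
end

section
/- For every even integer m ≥ 8 there exists a decentralized linear code of length ℓ = m/2 for parameters (m, s = 3) that is both correct and secure. -/
open SDPicod

namespace SDPAux

variable {m : ℕ}

/-- parity homomorphism -/
def pr (h2 : (2:ℕ) ∣ m) : ZMod m →+* ZMod 2 := ZMod.castHom h2 (ZMod 2)

/-- partner of an index under the pairing {2t, 2t+1} -/
def ptn (h2 : (2:ℕ) ∣ m) (j : ZMod m) : ZMod m :=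
  if pr h2 j = 0 then j + 1 else j - 1

lemma zmod2_cases (z : ZMod 2) : z = 0 ∨ z = 1 := by revert z; decide

lemma zmod2_sub (z : ZMod 2) : z - 1 = z + 1 := by revert z; decide

lemma pr_ptn (h2 : (2:ℕ) ∣ m) (j : ZMod m) : pr h2 (ptn h2 j) = pr h2 j + 1 := by
  unfold ptn
  split
  · rw [map_add, map_one]
  · rw [map_sub, map_one, zmod2_sub]

lemma one_ne_zero' (hm : 8 ≤ m) : (1 : ZMod m) ≠ 0 := by
  haveI : NeZero m := ⟨by omega⟩
  intro h
  have := (ZMod.natCast_eq_zero_iff 1 m).mp (by exact_mod_cast h)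
  have := Nat.le_of_dvd one_pos this
  omega

lemma ptn_ne (hm : 8 ≤ m) (h2 : (2:ℕ) ∣ m) (j : ZMod m) : ptn h2 j ≠ j := by
  unfold ptn
  split <;> intro h
  · exact one_ne_zero' hm (by linear_combination h)
  · exact one_ne_zero' hm (by linear_combination -h)

lemma ptn_even (h2 : (2:ℕ) ∣ m) (j : ZMod m) (h : pr h2 j = 0) : ptn h2 j = j + 1 := by
  simp [ptn, h]

lemma ptn_odd (h2 : (2:ℕ) ∣ m) (j : ZMod m) (h : pr h2 j ≠ 0) : ptn h2 j = j - 1 := by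
  simp [ptn, h]

lemma ptn_ptn (h2 : (2:ℕ) ∣ m) (j : ZMod m) : ptn h2 (ptn h2 j) = j := by
  have h := pr_ptn h2 j
  rcases zmod2_cases (pr h2 j) with h0 | h1
  · rw [ptn_even h2 j h0] at h ⊢
    rw [ptn_odd h2 (j+1) (by rw [h, h0]; decide)]; ring
  · rw [ptn_odd h2 j (by rw [h1]; decide)] at h ⊢
    rw [ptn_even h2 (j-1) (by rw [h, h1]; decide)]; ring

end SDPAux

theorem feasible_s_eq_three_even (m : ℕ) (hm : 8 ≤ m) (heven : Even m) :
    ∃ G : Fin (m / 2) → ZMod m → ZMod 2,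
      IsDecentralizedCode m 3 G ∧ Correct m 3 G ∧ Secure m 3 G := by
  haveI : NeZero m := ⟨by omega⟩
  have h2 : (2:ℕ) ∣ m := heven.two_dvd
  set p := SDPAux.pr (m := m) h2 with hp
  set pt := SDPAux.ptn (m := m) h2 with hptdef
  -- the row starting points
  set a : Fin (m/2) → ZMod m := fun t => ((2*t.1 : ℕ) : ZMod m) with ha
  set G : Fin (m/2) → ZMod m → ZMod 2 :=
    fun t => Pi.single (a t) 1 + Pi.single (a t + 1) 1 with hG
  -- basic facts
  have hpa : ∀ t, p (a t) = 0 := by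
    intro t
    show SDPAux.pr h2 ((2*t.1 : ℕ) : ZMod m) = 0
    rw [map_natCast]
    exact (ZMod.natCast_eq_zero_iff _ 2).mpr ⟨t.1, rfl⟩
  have hpta : ∀ t, pt (a t) = a t + 1 := fun t => SDPAux.ptn_even h2 _ (hpa t)
  have hpta1 : ∀ t, pt (a t + 1) = a t := by
    intro t
    conv_rhs => rw [← SDPAux.ptn_ptn h2 (a t)]
    rw [← hpta t]
  have small_ne : ∀ c : ℕ, 0 < c → c < m → ((c : ℕ) : ZMod m) ≠ 0 := by
    intro c hc hcm h
    have := (ZMod.natCast_eq_zero_iff c m).mp h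
    have := Nat.le_of_dvd hc this
    omega
  have hone : (1 : ZMod m) ≠ 0 := SDPAux.one_ne_zero' hm
  have htwo : (2 : ZMod m) ≠ 0 := by
    have := small_ne 2 (by omega) (by omega); push_cast at this; exact this
  have hthree : (3 : ZMod m) ≠ 0 := by
    have := small_ne 3 (by omega) (by omega); push_cast at this; exact this
  have hptne : ∀ j, pt j ≠ j := SDPAux.ptn_ne hm h2
  have hptpt : ∀ j, pt (pt j) = j := SDPAux.ptn_ptn h2
  have hprpt : ∀ j, p (pt j) = p j + 1 := SDPAux.pr_ptn h2
  have hpteven : ∀ x : ZMod m, p x = 0 → pt x = x + 1 := fun x hx => SDPAux.ptn_even h2 x hx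
  have hptodd : ∀ x : ZMod m, p x ≠ 0 → pt x = x - 1 := fun x hx => SDPAux.ptn_odd h2 x hx
  have p2 : p (2 : ZMod m) = 0 := by
    have h' : ((2:ℕ) : ZMod m) = (2 : ZMod m) := by push_cast; ring
    show SDPAux.pr h2 (2 : ZMod m) = 0
    rw [← h', map_natCast]; decide
  have p3 : p (3 : ZMod m) = 1 := by
    have h' : ((3:ℕ) : ZMod m) = (3 : ZMod m) := by push_cast; ring
    show SDPAux.pr h2 (3 : ZMod m) = 1
    rw [← h', map_natCast]; decide
  -- membership characterization of side information
  have hmemA : ∀ i j : ZMod m, j ∈ sideInfo m 3 i ↔ (j = i ∨ j = i - 1 ∨ j = i - 2) := by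
    intro i j
    constructor
    · rintro ⟨k, hk, rfl⟩
      rw [Finset.mem_range] at hk
      interval_cases k
      · left; push_cast; ring
      · right; left; push_cast; ring
      · right; right; push_cast; ring
    · rintro (rfl | rfl | rfl)
      · exact ⟨0, by simp, by push_cast; ring⟩
      · exact ⟨1, by simp, by push_cast; ring⟩
      · exact ⟨2, by simp, by push_cast; ring⟩
  -- row existence for every even index
  have hrow : ∀ x : ZMod m, p x = 0 → ∃ t : Fin (m/2), a t = x := by
    intro x hx
    have hx' : (x.val : ZMod 2) = 0 := by
      have : SDPAux.pr h2 x = (x.val : ZMod 2) := by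
        show ZMod.castHom h2 (ZMod 2) x = _
        simp [ZMod.natCast_val]
      rw [← this]; exact hx
    have hdvd : 2 ∣ x.val := (ZMod.natCast_eq_zero_iff _ 2).mp hx'
    obtain ⟨c, hc⟩ := hdvd
    have hv : x.val < m := ZMod.val_lt x
    refine ⟨⟨c, by omega⟩, ?_⟩
    show ((2*c : ℕ) : ZMod m) = x
    rw [← hc]
    simp [ZMod.natCast_val]
  -- char-2 cancellation for Pi.single sums
  have hcancel : ∀ (u v : ZMod m),
      (Pi.single u 1 + Pi.single v 1 + Pi.single u 1 : ZMod m → ZMod 2) = Pi.single v 1 := by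
    intro u v
    funext x
    simp only [Pi.add_apply]
    generalize (Pi.single u 1 : ZMod m → ZMod 2) x = s1
    generalize (Pi.single v 1 : ZMod m → ZMod 2) x = s2
    revert s1 s2; decide
  -- generating set for user i
  set S : ZMod m → Set (ZMod m → ZMod 2) :=
    fun i => Set.range G ∪ {v | ∃ k ∈ sideInfo m 3 i, v = (Pi.single k (1 : ZMod 2) : ZMod m → ZMod 2)} with hS
  -- key impossibility: if neither j nor its partner is in the side info, j is not decodable
  have hker : ∀ (i j : ZMod m), j ∉ sideInfo m 3 i → pt j ∉ sideInfo m 3 i →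
      Pi.single j (1 : ZMod 2) ∉ Submodule.span (ZMod 2) (S i) := by
    intro i j hj hpj hmem
    set L : (ZMod m → ZMod 2) →ₗ[ZMod 2] ZMod 2 :=
      (LinearMap.proj j : (ZMod m → ZMod 2) →ₗ[ZMod 2] ZMod 2)
        + (LinearMap.proj (pt j) : (ZMod m → ZMod 2) →ₗ[ZMod 2] ZMod 2) with hL
    have hLapp : ∀ v : ZMod m → ZMod 2, L v = v j + v (pt j) := fun v => by
      simp [hL, LinearMap.add_apply, LinearMap.proj_apply]
    have hle : Submodule.span (ZMod 2) (S i) ≤ LinearMap.ker L := by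
      rw [Submodule.span_le]
      rintro v (⟨t, rfl⟩ | ⟨k, hk, rfl⟩)
      · simp only [SetLike.mem_coe, LinearMap.mem_ker, hLapp, hG]
        have e1 : j = a t ↔ pt j = a t + 1 := by
          constructor
          · rintro rfl; exact hpta t
          · intro h
            rw [← hptpt j, h, hpta1]
        have e2 : j = a t + 1 ↔ pt j = a t := by
          constructor
          · rintro rfl; exact hpta1 t
          · intro h
            rw [← hptpt j, h, hpta]
        simp only [Pi.add_apply, Pi.single_apply, ← e1, ← e2]
        split_ifs <;> decide
      · simp only [SetLike.mem_coe, LinearMap.mem_ker, hLapp]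
        have n1 : j ≠ k := fun h => hj (h ▸ hk)
        have n2 : pt j ≠ k := fun h => hpj (h ▸ hk)
        rw [Pi.single_eq_of_ne n1, Pi.single_eq_of_ne n2, add_zero]
    have := hle hmem
    rw [LinearMap.mem_ker, hLapp, Pi.single_eq_same,
      Pi.single_eq_of_ne (hptne j)] at this
    exact absurd this (by decide)
  -- correctness witnesses
  have hdec : ∀ i : ZMod m, (p i = 0 → i + 1 ∈ decSet m 3 G i) ∧
      (p i = 1 → i - 3 ∈ decSet m 3 G i) := by
    intro i
    constructor
    · intro hpi
      obtain ⟨t, ht⟩ := hrow i hpi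
      constructor
      · rw [hmemA]
        rintro (h | h | h)
        · exact hone (by linear_combination h)
        · exact htwo (by linear_combination h)
        · exact hthree (by linear_combination h)
      · have hmem1 : G t ∈ Submodule.span (ZMod 2) (S i) :=
          Submodule.subset_span (Or.inl ⟨t, rfl⟩)
        have hmem2 : Pi.single i (1 : ZMod 2) ∈ Submodule.span (ZMod 2) (S i) :=
          Submodule.subset_span (Or.inr ⟨i, (hmemA i i).mpr (Or.inl rfl), rfl⟩)
        have heq : Pi.single (i + 1) (1 : ZMod 2) = G t + Pi.single i 1 := by
          have hGt : G t = Pi.single (a t) 1 + Pi.single (a t + 1) 1 := rfl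
          rw [hGt, ht, hcancel]
        rw [heq]
        exact Submodule.add_mem _ hmem1 hmem2
    · intro hpi
      have hpi3 : p (i - 3) = 0 := by
        rw [map_sub, hpi, p3]; decide
      obtain ⟨t, ht⟩ := hrow (i - 3) hpi3
      constructor
      · rw [hmemA]
        rintro (h | h | h)
        · exact hthree (by linear_combination -h)
        · exact htwo (by linear_combination -h)
        · exact hone (by linear_combination -h)
      · have hmem1 : G t ∈ Submodule.span (ZMod 2) (S i) :=
          Submodule.subset_span (Or.inl ⟨t, rfl⟩)
        have hi2 : i - 2 ∈ sideInfo m 3 i := (hmemA i _).mpr (Or.inr (Or.inr rfl))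
        have hmem2 : Pi.single (i - 2) (1 : ZMod 2) ∈ Submodule.span (ZMod 2) (S i) :=
          Submodule.subset_span (Or.inr ⟨i - 2, hi2, rfl⟩)
        have heq : Pi.single (i - 3) (1 : ZMod 2) = G t + Pi.single (i - 2) 1 := by
          have hGt : G t = Pi.single (a t) 1 + Pi.single (a t + 1) 1 := rfl
          rw [hGt, ht]
          have h32 : i - 3 + 1 = i - 2 := by ring
          rw [h32]
          funext x
          simp only [Pi.add_apply]
          generalize (Pi.single (i-3) 1 : ZMod m → ZMod 2) x = s1
          generalize (Pi.single (i-2) 1 : ZMod m → ZMod 2) x = s2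
          revert s1 s2; decide
        rw [heq]
        exact Submodule.add_mem _ hmem1 hmem2
  -- uniqueness
  have huniq : ∀ i j : ZMod m, j ∈ decSet m 3 G i →
      (p i = 0 → j = i + 1) ∧ (p i = 1 → j = i - 3) := by
    intro i j hjdec
    obtain ⟨hjA, hjspan⟩ := hjdec
    have hptA : pt j ∈ sideInfo m 3 i := by
      by_contra hn
      exact hker i j hjA hn hjspan
    rw [hmemA] at hptA
    constructor
    · intro hpi
      rcases hptA with h | h | h
      · rw [← hptpt j, h]
        exact hpteven i hpi
      · exfalso
        apply hjA
        rw [← hptpt j, h]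
        have : p (i - 1) ≠ 0 := by
          rw [map_sub, hpi, map_one]; decide
        rw [hptodd _ this]
        exact (hmemA i _).mpr (Or.inr (Or.inr (by ring)))
      · exfalso
        apply hjA
        rw [← hptpt j, h]
        have : p (i - 2) = 0 := by
          rw [map_sub, hpi, p2]; decide
        rw [hpteven _ this]
        exact (hmemA i _).mpr (Or.inr (Or.inl (by ring)))
    · intro hpi
      rcases hptA with h | h | h
      · exfalso
        apply hjA
        rw [← hptpt j, h, hptodd i (by rw [hpi]; decide)]
        exact (hmemA i _).mpr (Or.inr (Or.inl rfl))
      · exfalso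
        apply hjA
        rw [← hptpt j, h]
        have : p (i - 1) = 0 := by
          rw [map_sub, hpi, map_one]; decide
        rw [hpteven _ this]
        exact (hmemA i _).mpr (Or.inl (by ring))
      · rw [← hptpt j, h]
        have : p (i - 2) ≠ 0 := by
          rw [map_sub, hpi, p2]; decide
        rw [hptodd _ this]
        ring
  refine ⟨G, ?_, ?_, ?_⟩
  · -- decentralized
    intro t
    refine ⟨a t + 1, ?_⟩
    intro x hx
    have hx' : x = a t ∨ x = a t + 1 := by
      by_contra hc
      push_neg at hc
      apply hx
      have hGt : G t x = (Pi.single (a t) 1 + Pi.single (a t + 1) 1 : ZMod m → ZMod 2) x := rfl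
      rw [hGt, Pi.add_apply, Pi.single_eq_of_ne hc.1, Pi.single_eq_of_ne hc.2, add_zero]
    rw [hmemA]
    rcases hx' with rfl | rfl
    · exact Or.inr (Or.inl (by ring))
    · exact Or.inl rfl
  · -- correct
    intro i
    rcases SDPAux.zmod2_cases (p i) with h0 | h1
    · exact ⟨i + 1, (hdec i).1 h0⟩
    · exact ⟨i - 3, (hdec i).2 h1⟩
  · -- secure
    intro i j1 hj1 j2 hj2
    rcases SDPAux.zmod2_cases (p i) with h0 | h1
    · rw [(huniq i j1 hj1).1 h0, (huniq i j2 hj2).1 h0]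
    · rw [(huniq i j1 hj1).2 h1, (huniq i j2 hj2).2 h1]
end

section
/- For every even integer m ≥ 8 there exists a decentralized linear code of length ℓ = 3 for parameters (m, s = m − 3) that is both correct and secure. -/
open SDPicod

section Aux

/-- Row 1 of the code, as a function of the natural representative. -/
def r1 (m j : ℕ) : ZMod 2 := if j < 2 then 1 else 0

/-- Row 2. -/
def r2 (m j : ℕ) : ZMod 2 :=
  if j = 2 ∨ j = 3 ∨ (4 ≤ j ∧ ((m - 1 - j) % 4 = 2 ∨ (m - 1 - j) % 4 = 3)) then 1 else 0

/-- Row 3. -/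
def r3 (m j : ℕ) : ZMod 2 :=
  if j = 4 ∨ j = 5 ∨ (6 ≤ j ∧ ((m - 1 - j) % 4 = 0 ∨ (m - 1 - j) % 4 = 1)) then 1 else 0

lemma r1_one {m j : ℕ} (h : j < 2) : r1 m j = 1 := if_pos h
lemma r1_zero {m j : ℕ} (h : ¬ j < 2) : r1 m j = 0 := if_neg h
lemma r2_one {m j : ℕ}
    (h : j = 2 ∨ j = 3 ∨ (4 ≤ j ∧ ((m - 1 - j) % 4 = 2 ∨ (m - 1 - j) % 4 = 3))) :
    r2 m j = 1 := if_pos h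
lemma r2_zero {m j : ℕ}
    (h : ¬(j = 2 ∨ j = 3 ∨ (4 ≤ j ∧ ((m - 1 - j) % 4 = 2 ∨ (m - 1 - j) % 4 = 3)))) :
    r2 m j = 0 := if_neg h
lemma r3_one {m j : ℕ}
    (h : j = 4 ∨ j = 5 ∨ (6 ≤ j ∧ ((m - 1 - j) % 4 = 0 ∨ (m - 1 - j) % 4 = 1))) :
    r3 m j = 1 := if_pos h
lemma r3_zero {m j : ℕ}
    (h : ¬(j = 4 ∨ j = 5 ∨ (6 ≤ j ∧ ((m - 1 - j) % 4 = 0 ∨ (m - 1 - j) % 4 = 1)))) :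
    r3 m j = 0 := if_neg h

lemma modh {m a b : ℕ} (h1 : a = b + m ∨ a = b) (h2 : b < m) : a % m = b := by
  rcases h1 with rfl | rfl
  · rw [Nat.add_mod_right]; exact Nat.mod_eq_of_lt h2
  · exact Nat.mod_eq_of_lt h2

/-- The code. -/
def Grow (m : ℕ) : Fin 3 → ZMod m → ZMod 2 := fun t j =>
  if t = 0 then r1 m j.val else if t = 1 then r2 m j.val else r3 m j.val

/-- Restriction to the window `{i+1, i+2, i+3}` as a linear map. -/
def Wmap (m : ℕ) (i : ZMod m) : (ZMod m → ZMod 2) →ₗ[ZMod 2] (Fin 3 → ZMod 2) where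
  toFun v := fun d => v (i + 1 + ((d : ℕ) : ZMod m))
  map_add' _ _ := rfl
  map_smul' _ _ := rfl

lemma Wmap_apply (m : ℕ) (i : ZMod m) (v : ZMod m → ZMod 2) (d : Fin 3) :
    Wmap m i v d = v (i + 1 + ((d : ℕ) : ZMod m)) := rfl

lemma key_nat (m n : ℕ) (hm : 8 ≤ m) (he : m % 2 = 0) (hn : n < m) :
    ∃ r : Fin 3, ∀ d : Fin 3,
      ((∃ a b c : ZMod 2,
          a • (fun d : Fin 3 => r1 m ((n + 1 + (d : ℕ)) % m))
        + b • (fun d : Fin 3 => r2 m ((n + 1 + (d : ℕ)) % m))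
        + c • (fun d : Fin 3 => r3 m ((n + 1 + (d : ℕ)) % m)) = Pi.single d 1) ↔ d = r) := by
  rcases (by omega : n = 0 ∨ n = 1 ∨ n = 2 ∨ n = 3 ∨ n = 4 ∨ (5 ≤ n ∧ n ≤ m - 4) ∨ n = m - 3 ∨ n = m - 2 ∨ n = m - 1) with h|h|h|h|h|h|h|h|h
  · subst h
    refine ⟨0, ?_⟩
    have h1 : (fun d : Fin 3 => r1 m ((0 + 1 + (d : ℕ)) % m)) = (![1,0,0] : Fin 3 → ZMod 2) := by
      funext d; fin_cases d
      · show r1 m ((0 + 1 + 0) % m) = 1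
        rw [show (0 + 1 + 0) % m = 1 from modh (by omega) (by omega)]
        exact r1_one (by omega)
      · show r1 m ((0 + 1 + 1) % m) = 0
        rw [show (0 + 1 + 1) % m = 2 from modh (by omega) (by omega)]
        exact r1_zero (by omega)
      · show r1 m ((0 + 1 + 2) % m) = 0
        rw [show (0 + 1 + 2) % m = 3 from modh (by omega) (by omega)]
        exact r1_zero (by omega)
    have h2 : (fun d : Fin 3 => r2 m ((0 + 1 + (d : ℕ)) % m)) = (![0,1,1] : Fin 3 → ZMod 2) := by
      funext d; fin_cases d
      · show r2 m ((0 + 1 + 0) % m) = 0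
        rw [show (0 + 1 + 0) % m = 1 from modh (by omega) (by omega)]
        exact r2_zero (by omega)
      · show r2 m ((0 + 1 + 1) % m) = 1
        rw [show (0 + 1 + 1) % m = 2 from modh (by omega) (by omega)]
        exact r2_one (by omega)
      · show r2 m ((0 + 1 + 2) % m) = 1
        rw [show (0 + 1 + 2) % m = 3 from modh (by omega) (by omega)]
        exact r2_one (by omega)
    have h3 : (fun d : Fin 3 => r3 m ((0 + 1 + (d : ℕ)) % m)) = (![0,0,0] : Fin 3 → ZMod 2) := by
      funext d; fin_cases d
      · show r3 m ((0 + 1 + 0) % m) = 0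
        rw [show (0 + 1 + 0) % m = 1 from modh (by omega) (by omega)]
        exact r3_zero (by omega)
      · show r3 m ((0 + 1 + 1) % m) = 0
        rw [show (0 + 1 + 1) % m = 2 from modh (by omega) (by omega)]
        exact r3_zero (by omega)
      · show r3 m ((0 + 1 + 2) % m) = 0
        rw [show (0 + 1 + 2) % m = 3 from modh (by omega) (by omega)]
        exact r3_zero (by omega)
    rw [h1, h2, h3]; decide
  · rcases (by omega : m % 4 = 0 ∨ m % 4 = 2) with h4|h4
    · subst h
      refine ⟨2, ?_⟩
      have h1 : (fun d : Fin 3 => r1 m ((1 + 1 + (d : ℕ)) % m)) = (![0,0,0] : Fin 3 → ZMod 2) := by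
        funext d; fin_cases d
        · show r1 m ((1 + 1 + 0) % m) = 0
          rw [show (1 + 1 + 0) % m = 2 from modh (by omega) (by omega)]
          exact r1_zero (by omega)
        · show r1 m ((1 + 1 + 1) % m) = 0
          rw [show (1 + 1 + 1) % m = 3 from modh (by omega) (by omega)]
          exact r1_zero (by omega)
        · show r1 m ((1 + 1 + 2) % m) = 0
          rw [show (1 + 1 + 2) % m = 4 from modh (by omega) (by omega)]
          exact r1_zero (by omega)
      have h2 : (fun d : Fin 3 => r2 m ((1 + 1 + (d : ℕ)) % m)) = (![1,1,1] : Fin 3 → ZMod 2) := by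
        funext d; fin_cases d
        · show r2 m ((1 + 1 + 0) % m) = 1
          rw [show (1 + 1 + 0) % m = 2 from modh (by omega) (by omega)]
          exact r2_one (by omega)
        · show r2 m ((1 + 1 + 1) % m) = 1
          rw [show (1 + 1 + 1) % m = 3 from modh (by omega) (by omega)]
          exact r2_one (by omega)
        · show r2 m ((1 + 1 + 2) % m) = 1
          rw [show (1 + 1 + 2) % m = 4 from modh (by omega) (by omega)]
          exact r2_one (by omega)
      have h3 : (fun d : Fin 3 => r3 m ((1 + 1 + (d : ℕ)) % m)) = (![0,0,1] : Fin 3 → ZMod 2) := by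
        funext d; fin_cases d
        · show r3 m ((1 + 1 + 0) % m) = 0
          rw [show (1 + 1 + 0) % m = 2 from modh (by omega) (by omega)]
          exact r3_zero (by omega)
        · show r3 m ((1 + 1 + 1) % m) = 0
          rw [show (1 + 1 + 1) % m = 3 from modh (by omega) (by omega)]
          exact r3_zero (by omega)
        · show r3 m ((1 + 1 + 2) % m) = 1
          rw [show (1 + 1 + 2) % m = 4 from modh (by omega) (by omega)]
          exact r3_one (by omega)
      rw [h1, h2, h3]; decide
    · subst h
      refine ⟨2, ?_⟩
      have h1 : (fun d : Fin 3 => r1 m ((1 + 1 + (d : ℕ)) % m)) = (![0,0,0] : Fin 3 → ZMod 2) := by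
        funext d; fin_cases d
        · show r1 m ((1 + 1 + 0) % m) = 0
          rw [show (1 + 1 + 0) % m = 2 from modh (by omega) (by omega)]
          exact r1_zero (by omega)
        · show r1 m ((1 + 1 + 1) % m) = 0
          rw [show (1 + 1 + 1) % m = 3 from modh (by omega) (by omega)]
          exact r1_zero (by omega)
        · show r1 m ((1 + 1 + 2) % m) = 0
          rw [show (1 + 1 + 2) % m = 4 from modh (by omega) (by omega)]
          exact r1_zero (by omega)
      have h2 : (fun d : Fin 3 => r2 m ((1 + 1 + (d : ℕ)) % m)) = (![1,1,0] : Fin 3 → ZMod 2) := by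
        funext d; fin_cases d
        · show r2 m ((1 + 1 + 0) % m) = 1
          rw [show (1 + 1 + 0) % m = 2 from modh (by omega) (by omega)]
          exact r2_one (by omega)
        · show r2 m ((1 + 1 + 1) % m) = 1
          rw [show (1 + 1 + 1) % m = 3 from modh (by omega) (by omega)]
          exact r2_one (by omega)
        · show r2 m ((1 + 1 + 2) % m) = 0
          rw [show (1 + 1 + 2) % m = 4 from modh (by omega) (by omega)]
          exact r2_zero (by omega)
      have h3 : (fun d : Fin 3 => r3 m ((1 + 1 + (d : ℕ)) % m)) = (![0,0,1] : Fin 3 → ZMod 2) := by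
        funext d; fin_cases d
        · show r3 m ((1 + 1 + 0) % m) = 0
          rw [show (1 + 1 + 0) % m = 2 from modh (by omega) (by omega)]
          exact r3_zero (by omega)
        · show r3 m ((1 + 1 + 1) % m) = 0
          rw [show (1 + 1 + 1) % m = 3 from modh (by omega) (by omega)]
          exact r3_zero (by omega)
        · show r3 m ((1 + 1 + 2) % m) = 1
          rw [show (1 + 1 + 2) % m = 4 from modh (by omega) (by omega)]
          exact r3_one (by omega)
      rw [h1, h2, h3]; decide
  · rcases (by omega : m % 4 = 0 ∨ m % 4 = 2) with h4|h4
    · subst h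
      refine ⟨0, ?_⟩
      have h1 : (fun d : Fin 3 => r1 m ((2 + 1 + (d : ℕ)) % m)) = (![0,0,0] : Fin 3 → ZMod 2) := by
        funext d; fin_cases d
        · show r1 m ((2 + 1 + 0) % m) = 0
          rw [show (2 + 1 + 0) % m = 3 from modh (by omega) (by omega)]
          exact r1_zero (by omega)
        · show r1 m ((2 + 1 + 1) % m) = 0
          rw [show (2 + 1 + 1) % m = 4 from modh (by omega) (by omega)]
          exact r1_zero (by omega)
        · show r1 m ((2 + 1 + 2) % m) = 0
          rw [show (2 + 1 + 2) % m = 5 from modh (by omega) (by omega)]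
          exact r1_zero (by omega)
      have h2 : (fun d : Fin 3 => r2 m ((2 + 1 + (d : ℕ)) % m)) = (![1,1,1] : Fin 3 → ZMod 2) := by
        funext d; fin_cases d
        · show r2 m ((2 + 1 + 0) % m) = 1
          rw [show (2 + 1 + 0) % m = 3 from modh (by omega) (by omega)]
          exact r2_one (by omega)
        · show r2 m ((2 + 1 + 1) % m) = 1
          rw [show (2 + 1 + 1) % m = 4 from modh (by omega) (by omega)]
          exact r2_one (by omega)
        · show r2 m ((2 + 1 + 2) % m) = 1
          rw [show (2 + 1 + 2) % m = 5 from modh (by omega) (by omega)]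
          exact r2_one (by omega)
      have h3 : (fun d : Fin 3 => r3 m ((2 + 1 + (d : ℕ)) % m)) = (![0,1,1] : Fin 3 → ZMod 2) := by
        funext d; fin_cases d
        · show r3 m ((2 + 1 + 0) % m) = 0
          rw [show (2 + 1 + 0) % m = 3 from modh (by omega) (by omega)]
          exact r3_zero (by omega)
        · show r3 m ((2 + 1 + 1) % m) = 1
          rw [show (2 + 1 + 1) % m = 4 from modh (by omega) (by omega)]
          exact r3_one (by omega)
        · show r3 m ((2 + 1 + 2) % m) = 1
          rw [show (2 + 1 + 2) % m = 5 from modh (by omega) (by omega)]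
          exact r3_one (by omega)
      rw [h1, h2, h3]; decide
    · subst h
      refine ⟨0, ?_⟩
      have h1 : (fun d : Fin 3 => r1 m ((2 + 1 + (d : ℕ)) % m)) = (![0,0,0] : Fin 3 → ZMod 2) := by
        funext d; fin_cases d
        · show r1 m ((2 + 1 + 0) % m) = 0
          rw [show (2 + 1 + 0) % m = 3 from modh (by omega) (by omega)]
          exact r1_zero (by omega)
        · show r1 m ((2 + 1 + 1) % m) = 0
          rw [show (2 + 1 + 1) % m = 4 from modh (by omega) (by omega)]
          exact r1_zero (by omega)
        · show r1 m ((2 + 1 + 2) % m) = 0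
          rw [show (2 + 1 + 2) % m = 5 from modh (by omega) (by omega)]
          exact r1_zero (by omega)
      have h2 : (fun d : Fin 3 => r2 m ((2 + 1 + (d : ℕ)) % m)) = (![1,0,0] : Fin 3 → ZMod 2) := by
        funext d; fin_cases d
        · show r2 m ((2 + 1 + 0) % m) = 1
          rw [show (2 + 1 + 0) % m = 3 from modh (by omega) (by omega)]
          exact r2_one (by omega)
        · show r2 m ((2 + 1 + 1) % m) = 0
          rw [show (2 + 1 + 1) % m = 4 from modh (by omega) (by omega)]
          exact r2_zero (by omega)
        · show r2 m ((2 + 1 + 2) % m) = 0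
          rw [show (2 + 1 + 2) % m = 5 from modh (by omega) (by omega)]
          exact r2_zero (by omega)
      have h3 : (fun d : Fin 3 => r3 m ((2 + 1 + (d : ℕ)) % m)) = (![0,1,1] : Fin 3 → ZMod 2) := by
        funext d; fin_cases d
        · show r3 m ((2 + 1 + 0) % m) = 0
          rw [show (2 + 1 + 0) % m = 3 from modh (by omega) (by omega)]
          exact r3_zero (by omega)
        · show r3 m ((2 + 1 + 1) % m) = 1
          rw [show (2 + 1 + 1) % m = 4 from modh (by omega) (by omega)]
          exact r3_one (by omega)
        · show r3 m ((2 + 1 + 2) % m) = 1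
          rw [show (2 + 1 + 2) % m = 5 from modh (by omega) (by omega)]
          exact r3_one (by omega)
      rw [h1, h2, h3]; decide
  · rcases (by omega : m % 4 = 0 ∨ m % 4 = 2) with h4|h4
    · subst h
      refine ⟨2, ?_⟩
      have h1 : (fun d : Fin 3 => r1 m ((3 + 1 + (d : ℕ)) % m)) = (![0,0,0] : Fin 3 → ZMod 2) := by
        funext d; fin_cases d
        · show r1 m ((3 + 1 + 0) % m) = 0
          rw [show (3 + 1 + 0) % m = 4 from modh (by omega) (by omega)]
          exact r1_zero (by omega)
        · show r1 m ((3 + 1 + 1) % m) = 0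
          rw [show (3 + 1 + 1) % m = 5 from modh (by omega) (by omega)]
          exact r1_zero (by omega)
        · show r1 m ((3 + 1 + 2) % m) = 0
          rw [show (3 + 1 + 2) % m = 6 from modh (by omega) (by omega)]
          exact r1_zero (by omega)
      have h2 : (fun d : Fin 3 => r2 m ((3 + 1 + (d : ℕ)) % m)) = (![1,1,0] : Fin 3 → ZMod 2) := by
        funext d; fin_cases d
        · show r2 m ((3 + 1 + 0) % m) = 1
          rw [show (3 + 1 + 0) % m = 4 from modh (by omega) (by omega)]
          exact r2_one (by omega)
        · show r2 m ((3 + 1 + 1) % m) = 1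
          rw [show (3 + 1 + 1) % m = 5 from modh (by omega) (by omega)]
          exact r2_one (by omega)
        · show r2 m ((3 + 1 + 2) % m) = 0
          rw [show (3 + 1 + 2) % m = 6 from modh (by omega) (by omega)]
          exact r2_zero (by omega)
      have h3 : (fun d : Fin 3 => r3 m ((3 + 1 + (d : ℕ)) % m)) = (![1,1,1] : Fin 3 → ZMod 2) := by
        funext d; fin_cases d
        · show r3 m ((3 + 1 + 0) % m) = 1
          rw [show (3 + 1 + 0) % m = 4 from modh (by omega) (by omega)]
          exact r3_one (by omega)
        · show r3 m ((3 + 1 + 1) % m) = 1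
          rw [show (3 + 1 + 1) % m = 5 from modh (by omega) (by omega)]
          exact r3_one (by omega)
        · show r3 m ((3 + 1 + 2) % m) = 1
          rw [show (3 + 1 + 2) % m = 6 from modh (by omega) (by omega)]
          exact r3_one (by omega)
      rw [h1, h2, h3]; decide
    · subst h
      refine ⟨2, ?_⟩
      have h1 : (fun d : Fin 3 => r1 m ((3 + 1 + (d : ℕ)) % m)) = (![0,0,0] : Fin 3 → ZMod 2) := by
        funext d; fin_cases d
        · show r1 m ((3 + 1 + 0) % m) = 0
          rw [show (3 + 1 + 0) % m = 4 from modh (by omega) (by omega)]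
          exact r1_zero (by omega)
        · show r1 m ((3 + 1 + 1) % m) = 0
          rw [show (3 + 1 + 1) % m = 5 from modh (by omega) (by omega)]
          exact r1_zero (by omega)
        · show r1 m ((3 + 1 + 2) % m) = 0
          rw [show (3 + 1 + 2) % m = 6 from modh (by omega) (by omega)]
          exact r1_zero (by omega)
      have h2 : (fun d : Fin 3 => r2 m ((3 + 1 + (d : ℕ)) % m)) = (![0,0,1] : Fin 3 → ZMod 2) := by
        funext d; fin_cases d
        · show r2 m ((3 + 1 + 0) % m) = 0
          rw [show (3 + 1 + 0) % m = 4 from modh (by omega) (by omega)]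
          exact r2_zero (by omega)
        · show r2 m ((3 + 1 + 1) % m) = 0
          rw [show (3 + 1 + 1) % m = 5 from modh (by omega) (by omega)]
          exact r2_zero (by omega)
        · show r2 m ((3 + 1 + 2) % m) = 1
          rw [show (3 + 1 + 2) % m = 6 from modh (by omega) (by omega)]
          exact r2_one (by omega)
      have h3 : (fun d : Fin 3 => r3 m ((3 + 1 + (d : ℕ)) % m)) = (![1,1,0] : Fin 3 → ZMod 2) := by
        funext d; fin_cases d
        · show r3 m ((3 + 1 + 0) % m) = 1
          rw [show (3 + 1 + 0) % m = 4 from modh (by omega) (by omega)]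
          exact r3_one (by omega)
        · show r3 m ((3 + 1 + 1) % m) = 1
          rw [show (3 + 1 + 1) % m = 5 from modh (by omega) (by omega)]
          exact r3_one (by omega)
        · show r3 m ((3 + 1 + 2) % m) = 0
          rw [show (3 + 1 + 2) % m = 6 from modh (by omega) (by omega)]
          exact r3_zero (by omega)
      rw [h1, h2, h3]; decide
  · rcases (by omega : m % 4 = 0 ∨ m % 4 = 2) with h4|h4
    · subst h
      refine ⟨0, ?_⟩
      have h1 : (fun d : Fin 3 => r1 m ((4 + 1 + (d : ℕ)) % m)) = (![0,0,0] : Fin 3 → ZMod 2) := by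
        funext d; fin_cases d
        · show r1 m ((4 + 1 + 0) % m) = 0
          rw [show (4 + 1 + 0) % m = 5 from modh (by omega) (by omega)]
          exact r1_zero (by omega)
        · show r1 m ((4 + 1 + 1) % m) = 0
          rw [show (4 + 1 + 1) % m = 6 from modh (by omega) (by omega)]
          exact r1_zero (by omega)
        · show r1 m ((4 + 1 + 2) % m) = 0
          rw [show (4 + 1 + 2) % m = 7 from modh (by omega) (by omega)]
          exact r1_zero (by omega)
      have h2 : (fun d : Fin 3 => r2 m ((4 + 1 + (d : ℕ)) % m)) = (![1,0,0] : Fin 3 → ZMod 2) := by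
        funext d; fin_cases d
        · show r2 m ((4 + 1 + 0) % m) = 1
          rw [show (4 + 1 + 0) % m = 5 from modh (by omega) (by omega)]
          exact r2_one (by omega)
        · show r2 m ((4 + 1 + 1) % m) = 0
          rw [show (4 + 1 + 1) % m = 6 from modh (by omega) (by omega)]
          exact r2_zero (by omega)
        · show r2 m ((4 + 1 + 2) % m) = 0
          rw [show (4 + 1 + 2) % m = 7 from modh (by omega) (by omega)]
          exact r2_zero (by omega)
      have h3 : (fun d : Fin 3 => r3 m ((4 + 1 + (d : ℕ)) % m)) = (![1,1,1] : Fin 3 → ZMod 2) := by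
        funext d; fin_cases d
        · show r3 m ((4 + 1 + 0) % m) = 1
          rw [show (4 + 1 + 0) % m = 5 from modh (by omega) (by omega)]
          exact r3_one (by omega)
        · show r3 m ((4 + 1 + 1) % m) = 1
          rw [show (4 + 1 + 1) % m = 6 from modh (by omega) (by omega)]
          exact r3_one (by omega)
        · show r3 m ((4 + 1 + 2) % m) = 1
          rw [show (4 + 1 + 2) % m = 7 from modh (by omega) (by omega)]
          exact r3_one (by omega)
      rw [h1, h2, h3]; decide
    · subst h
      refine ⟨0, ?_⟩
      have h1 : (fun d : Fin 3 => r1 m ((4 + 1 + (d : ℕ)) % m)) = (![0,0,0] : Fin 3 → ZMod 2) := by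
        funext d; fin_cases d
        · show r1 m ((4 + 1 + 0) % m) = 0
          rw [show (4 + 1 + 0) % m = 5 from modh (by omega) (by omega)]
          exact r1_zero (by omega)
        · show r1 m ((4 + 1 + 1) % m) = 0
          rw [show (4 + 1 + 1) % m = 6 from modh (by omega) (by omega)]
          exact r1_zero (by omega)
        · show r1 m ((4 + 1 + 2) % m) = 0
          rw [show (4 + 1 + 2) % m = 7 from modh (by omega) (by omega)]
          exact r1_zero (by omega)
      have h2 : (fun d : Fin 3 => r2 m ((4 + 1 + (d : ℕ)) % m)) = (![0,1,1] : Fin 3 → ZMod 2) := by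
        funext d; fin_cases d
        · show r2 m ((4 + 1 + 0) % m) = 0
          rw [show (4 + 1 + 0) % m = 5 from modh (by omega) (by omega)]
          exact r2_zero (by omega)
        · show r2 m ((4 + 1 + 1) % m) = 1
          rw [show (4 + 1 + 1) % m = 6 from modh (by omega) (by omega)]
          exact r2_one (by omega)
        · show r2 m ((4 + 1 + 2) % m) = 1
          rw [show (4 + 1 + 2) % m = 7 from modh (by omega) (by omega)]
          exact r2_one (by omega)
      have h3 : (fun d : Fin 3 => r3 m ((4 + 1 + (d : ℕ)) % m)) = (![1,0,0] : Fin 3 → ZMod 2) := by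
        funext d; fin_cases d
        · show r3 m ((4 + 1 + 0) % m) = 1
          rw [show (4 + 1 + 0) % m = 5 from modh (by omega) (by omega)]
          exact r3_one (by omega)
        · show r3 m ((4 + 1 + 1) % m) = 0
          rw [show (4 + 1 + 1) % m = 6 from modh (by omega) (by omega)]
          exact r3_zero (by omega)
        · show r3 m ((4 + 1 + 2) % m) = 0
          rw [show (4 + 1 + 2) % m = 7 from modh (by omega) (by omega)]
          exact r3_zero (by omega)
      rw [h1, h2, h3]; decide
  · obtain ⟨h5, h6⟩ := h
    rcases (by omega : (m - 2 - n) % 4 = 0 ∨ (m - 2 - n) % 4 = 1 ∨ (m - 2 - n) % 4 = 2 ∨ (m - 2 - n) % 4 = 3) with hc|hc|hc|hc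
    · -- bulk
      refine ⟨0, ?_⟩
      have h1 : (fun d : Fin 3 => r1 m ((n + 1 + (d : ℕ)) % m)) = (![0,0,0] : Fin 3 → ZMod 2) := by
        funext d; fin_cases d
        · show r1 m ((n + 1 + 0) % m) = 0
          rw [show (n + 1 + 0) % m = n + 1 from modh (by omega) (by omega)]
          exact r1_zero (by omega)
        · show r1 m ((n + 1 + 1) % m) = 0
          rw [show (n + 1 + 1) % m = n + 2 from modh (by omega) (by omega)]
          exact r1_zero (by omega)
        · show r1 m ((n + 1 + 2) % m) = 0
          rw [show (n + 1 + 2) % m = n + 3 from modh (by omega) (by omega)]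
          exact r1_zero (by omega)
      have h2 : (fun d : Fin 3 => r2 m ((n + 1 + (d : ℕ)) % m)) = (![0,1,1] : Fin 3 → ZMod 2) := by
        funext d; fin_cases d
        · show r2 m ((n + 1 + 0) % m) = 0
          rw [show (n + 1 + 0) % m = n + 1 from modh (by omega) (by omega)]
          exact r2_zero (by omega)
        · show r2 m ((n + 1 + 1) % m) = 1
          rw [show (n + 1 + 1) % m = n + 2 from modh (by omega) (by omega)]
          exact r2_one (by omega)
        · show r2 m ((n + 1 + 2) % m) = 1
          rw [show (n + 1 + 2) % m = n + 3 from modh (by omega) (by omega)]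
          exact r2_one (by omega)
      have h3 : (fun d : Fin 3 => r3 m ((n + 1 + (d : ℕ)) % m)) = (![1,0,0] : Fin 3 → ZMod 2) := by
        funext d; fin_cases d
        · show r3 m ((n + 1 + 0) % m) = 1
          rw [show (n + 1 + 0) % m = n + 1 from modh (by omega) (by omega)]
          exact r3_one (by omega)
        · show r3 m ((n + 1 + 1) % m) = 0
          rw [show (n + 1 + 1) % m = n + 2 from modh (by omega) (by omega)]
          exact r3_zero (by omega)
        · show r3 m ((n + 1 + 2) % m) = 0
          rw [show (n + 1 + 2) % m = n + 3 from modh (by omega) (by omega)]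
          exact r3_zero (by omega)
      rw [h1, h2, h3]; decide
    · -- bulk
      refine ⟨2, ?_⟩
      have h1 : (fun d : Fin 3 => r1 m ((n + 1 + (d : ℕ)) % m)) = (![0,0,0] : Fin 3 → ZMod 2) := by
        funext d; fin_cases d
        · show r1 m ((n + 1 + 0) % m) = 0
          rw [show (n + 1 + 0) % m = n + 1 from modh (by omega) (by omega)]
          exact r1_zero (by omega)
        · show r1 m ((n + 1 + 1) % m) = 0
          rw [show (n + 1 + 1) % m = n + 2 from modh (by omega) (by omega)]
          exact r1_zero (by omega)
        · show r1 m ((n + 1 + 2) % m) = 0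
          rw [show (n + 1 + 2) % m = n + 3 from modh (by omega) (by omega)]
          exact r1_zero (by omega)
      have h2 : (fun d : Fin 3 => r2 m ((n + 1 + (d : ℕ)) % m)) = (![0,0,1] : Fin 3 → ZMod 2) := by
        funext d; fin_cases d
        · show r2 m ((n + 1 + 0) % m) = 0
          rw [show (n + 1 + 0) % m = n + 1 from modh (by omega) (by omega)]
          exact r2_zero (by omega)
        · show r2 m ((n + 1 + 1) % m) = 0
          rw [show (n + 1 + 1) % m = n + 2 from modh (by omega) (by omega)]
          exact r2_zero (by omega)
        · show r2 m ((n + 1 + 2) % m) = 1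
          rw [show (n + 1 + 2) % m = n + 3 from modh (by omega) (by omega)]
          exact r2_one (by omega)
      have h3 : (fun d : Fin 3 => r3 m ((n + 1 + (d : ℕ)) % m)) = (![1,1,0] : Fin 3 → ZMod 2) := by
        funext d; fin_cases d
        · show r3 m ((n + 1 + 0) % m) = 1
          rw [show (n + 1 + 0) % m = n + 1 from modh (by omega) (by omega)]
          exact r3_one (by omega)
        · show r3 m ((n + 1 + 1) % m) = 1
          rw [show (n + 1 + 1) % m = n + 2 from modh (by omega) (by omega)]
          exact r3_one (by omega)
        · show r3 m ((n + 1 + 2) % m) = 0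
          rw [show (n + 1 + 2) % m = n + 3 from modh (by omega) (by omega)]
          exact r3_zero (by omega)
      rw [h1, h2, h3]; decide
    · -- bulk
      refine ⟨0, ?_⟩
      have h1 : (fun d : Fin 3 => r1 m ((n + 1 + (d : ℕ)) % m)) = (![0,0,0] : Fin 3 → ZMod 2) := by
        funext d; fin_cases d
        · show r1 m ((n + 1 + 0) % m) = 0
          rw [show (n + 1 + 0) % m = n + 1 from modh (by omega) (by omega)]
          exact r1_zero (by omega)
        · show r1 m ((n + 1 + 1) % m) = 0
          rw [show (n + 1 + 1) % m = n + 2 from modh (by omega) (by omega)]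
          exact r1_zero (by omega)
        · show r1 m ((n + 1 + 2) % m) = 0
          rw [show (n + 1 + 2) % m = n + 3 from modh (by omega) (by omega)]
          exact r1_zero (by omega)
      have h2 : (fun d : Fin 3 => r2 m ((n + 1 + (d : ℕ)) % m)) = (![1,0,0] : Fin 3 → ZMod 2) := by
        funext d; fin_cases d
        · show r2 m ((n + 1 + 0) % m) = 1
          rw [show (n + 1 + 0) % m = n + 1 from modh (by omega) (by omega)]
          exact r2_one (by omega)
        · show r2 m ((n + 1 + 1) % m) = 0
          rw [show (n + 1 + 1) % m = n + 2 from modh (by omega) (by omega)]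
          exact r2_zero (by omega)
        · show r2 m ((n + 1 + 2) % m) = 0
          rw [show (n + 1 + 2) % m = n + 3 from modh (by omega) (by omega)]
          exact r2_zero (by omega)
      have h3 : (fun d : Fin 3 => r3 m ((n + 1 + (d : ℕ)) % m)) = (![0,1,1] : Fin 3 → ZMod 2) := by
        funext d; fin_cases d
        · show r3 m ((n + 1 + 0) % m) = 0
          rw [show (n + 1 + 0) % m = n + 1 from modh (by omega) (by omega)]
          exact r3_zero (by omega)
        · show r3 m ((n + 1 + 1) % m) = 1
          rw [show (n + 1 + 1) % m = n + 2 from modh (by omega) (by omega)]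
          exact r3_one (by omega)
        · show r3 m ((n + 1 + 2) % m) = 1
          rw [show (n + 1 + 2) % m = n + 3 from modh (by omega) (by omega)]
          exact r3_one (by omega)
      rw [h1, h2, h3]; decide
    · -- bulk
      refine ⟨2, ?_⟩
      have h1 : (fun d : Fin 3 => r1 m ((n + 1 + (d : ℕ)) % m)) = (![0,0,0] : Fin 3 → ZMod 2) := by
        funext d; fin_cases d
        · show r1 m ((n + 1 + 0) % m) = 0
          rw [show (n + 1 + 0) % m = n + 1 from modh (by omega) (by omega)]
          exact r1_zero (by omega)
        · show r1 m ((n + 1 + 1) % m) = 0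
          rw [show (n + 1 + 1) % m = n + 2 from modh (by omega) (by omega)]
          exact r1_zero (by omega)
        · show r1 m ((n + 1 + 2) % m) = 0
          rw [show (n + 1 + 2) % m = n + 3 from modh (by omega) (by omega)]
          exact r1_zero (by omega)
      have h2 : (fun d : Fin 3 => r2 m ((n + 1 + (d : ℕ)) % m)) = (![1,1,0] : Fin 3 → ZMod 2) := by
        funext d; fin_cases d
        · show r2 m ((n + 1 + 0) % m) = 1
          rw [show (n + 1 + 0) % m = n + 1 from modh (by omega) (by omega)]
          exact r2_one (by omega)
        · show r2 m ((n + 1 + 1) % m) = 1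
          rw [show (n + 1 + 1) % m = n + 2 from modh (by omega) (by omega)]
          exact r2_one (by omega)
        · show r2 m ((n + 1 + 2) % m) = 0
          rw [show (n + 1 + 2) % m = n + 3 from modh (by omega) (by omega)]
          exact r2_zero (by omega)
      have h3 : (fun d : Fin 3 => r3 m ((n + 1 + (d : ℕ)) % m)) = (![0,0,1] : Fin 3 → ZMod 2) := by
        funext d; fin_cases d
        · show r3 m ((n + 1 + 0) % m) = 0
          rw [show (n + 1 + 0) % m = n + 1 from modh (by omega) (by omega)]
          exact r3_zero (by omega)
        · show r3 m ((n + 1 + 1) % m) = 0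
          rw [show (n + 1 + 1) % m = n + 2 from modh (by omega) (by omega)]
          exact r3_zero (by omega)
        · show r3 m ((n + 1 + 2) % m) = 1
          rw [show (n + 1 + 2) % m = n + 3 from modh (by omega) (by omega)]
          exact r3_one (by omega)
      rw [h1, h2, h3]; decide
  · subst h
    refine ⟨2, ?_⟩
    have h1 : (fun d : Fin 3 => r1 m ((m - 3 + 1 + (d : ℕ)) % m)) = (![0,0,1] : Fin 3 → ZMod 2) := by
      funext d; fin_cases d
      · show r1 m ((m - 3 + 1 + 0) % m) = 0
        rw [show (m - 3 + 1 + 0) % m = m - 2 from modh (by omega) (by omega)]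
        exact r1_zero (by omega)
      · show r1 m ((m - 3 + 1 + 1) % m) = 0
        rw [show (m - 3 + 1 + 1) % m = m - 1 from modh (by omega) (by omega)]
        exact r1_zero (by omega)
      · show r1 m ((m - 3 + 1 + 2) % m) = 1
        rw [show (m - 3 + 1 + 2) % m = 0 from modh (by omega) (by omega)]
        exact r1_one (by omega)
    have h2 : (fun d : Fin 3 => r2 m ((m - 3 + 1 + (d : ℕ)) % m)) = (![0,0,0] : Fin 3 → ZMod 2) := by
      funext d; fin_cases d
      · show r2 m ((m - 3 + 1 + 0) % m) = 0
        rw [show (m - 3 + 1 + 0) % m = m - 2 from modh (by omega) (by omega)]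
        exact r2_zero (by omega)
      · show r2 m ((m - 3 + 1 + 1) % m) = 0
        rw [show (m - 3 + 1 + 1) % m = m - 1 from modh (by omega) (by omega)]
        exact r2_zero (by omega)
      · show r2 m ((m - 3 + 1 + 2) % m) = 0
        rw [show (m - 3 + 1 + 2) % m = 0 from modh (by omega) (by omega)]
        exact r2_zero (by omega)
    have h3 : (fun d : Fin 3 => r3 m ((m - 3 + 1 + (d : ℕ)) % m)) = (![1,1,0] : Fin 3 → ZMod 2) := by
      funext d; fin_cases d
      · show r3 m ((m - 3 + 1 + 0) % m) = 1
        rw [show (m - 3 + 1 + 0) % m = m - 2 from modh (by omega) (by omega)]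
        exact r3_one (by omega)
      · show r3 m ((m - 3 + 1 + 1) % m) = 1
        rw [show (m - 3 + 1 + 1) % m = m - 1 from modh (by omega) (by omega)]
        exact r3_one (by omega)
      · show r3 m ((m - 3 + 1 + 2) % m) = 0
        rw [show (m - 3 + 1 + 2) % m = 0 from modh (by omega) (by omega)]
        exact r3_zero (by omega)
    rw [h1, h2, h3]; decide
  · subst h
    refine ⟨0, ?_⟩
    have h1 : (fun d : Fin 3 => r1 m ((m - 2 + 1 + (d : ℕ)) % m)) = (![0,1,1] : Fin 3 → ZMod 2) := by
      funext d; fin_cases d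
      · show r1 m ((m - 2 + 1 + 0) % m) = 0
        rw [show (m - 2 + 1 + 0) % m = m - 1 from modh (by omega) (by omega)]
        exact r1_zero (by omega)
      · show r1 m ((m - 2 + 1 + 1) % m) = 1
        rw [show (m - 2 + 1 + 1) % m = 0 from modh (by omega) (by omega)]
        exact r1_one (by omega)
      · show r1 m ((m - 2 + 1 + 2) % m) = 1
        rw [show (m - 2 + 1 + 2) % m = 1 from modh (by omega) (by omega)]
        exact r1_one (by omega)
    have h2 : (fun d : Fin 3 => r2 m ((m - 2 + 1 + (d : ℕ)) % m)) = (![0,0,0] : Fin 3 → ZMod 2) := by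
      funext d; fin_cases d
      · show r2 m ((m - 2 + 1 + 0) % m) = 0
        rw [show (m - 2 + 1 + 0) % m = m - 1 from modh (by omega) (by omega)]
        exact r2_zero (by omega)
      · show r2 m ((m - 2 + 1 + 1) % m) = 0
        rw [show (m - 2 + 1 + 1) % m = 0 from modh (by omega) (by omega)]
        exact r2_zero (by omega)
      · show r2 m ((m - 2 + 1 + 2) % m) = 0
        rw [show (m - 2 + 1 + 2) % m = 1 from modh (by omega) (by omega)]
        exact r2_zero (by omega)
    have h3 : (fun d : Fin 3 => r3 m ((m - 2 + 1 + (d : ℕ)) % m)) = (![1,0,0] : Fin 3 → ZMod 2) := by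
      funext d; fin_cases d
      · show r3 m ((m - 2 + 1 + 0) % m) = 1
        rw [show (m - 2 + 1 + 0) % m = m - 1 from modh (by omega) (by omega)]
        exact r3_one (by omega)
      · show r3 m ((m - 2 + 1 + 1) % m) = 0
        rw [show (m - 2 + 1 + 1) % m = 0 from modh (by omega) (by omega)]
        exact r3_zero (by omega)
      · show r3 m ((m - 2 + 1 + 2) % m) = 0
        rw [show (m - 2 + 1 + 2) % m = 1 from modh (by omega) (by omega)]
        exact r3_zero (by omega)
    rw [h1, h2, h3]; decide
  · subst h
    refine ⟨2, ?_⟩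
    have h1 : (fun d : Fin 3 => r1 m ((m - 1 + 1 + (d : ℕ)) % m)) = (![1,1,0] : Fin 3 → ZMod 2) := by
      funext d; fin_cases d
      · show r1 m ((m - 1 + 1 + 0) % m) = 1
        rw [show (m - 1 + 1 + 0) % m = 0 from modh (by omega) (by omega)]
        exact r1_one (by omega)
      · show r1 m ((m - 1 + 1 + 1) % m) = 1
        rw [show (m - 1 + 1 + 1) % m = 1 from modh (by omega) (by omega)]
        exact r1_one (by omega)
      · show r1 m ((m - 1 + 1 + 2) % m) = 0
        rw [show (m - 1 + 1 + 2) % m = 2 from modh (by omega) (by omega)]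
        exact r1_zero (by omega)
    have h2 : (fun d : Fin 3 => r2 m ((m - 1 + 1 + (d : ℕ)) % m)) = (![0,0,1] : Fin 3 → ZMod 2) := by
      funext d; fin_cases d
      · show r2 m ((m - 1 + 1 + 0) % m) = 0
        rw [show (m - 1 + 1 + 0) % m = 0 from modh (by omega) (by omega)]
        exact r2_zero (by omega)
      · show r2 m ((m - 1 + 1 + 1) % m) = 0
        rw [show (m - 1 + 1 + 1) % m = 1 from modh (by omega) (by omega)]
        exact r2_zero (by omega)
      · show r2 m ((m - 1 + 1 + 2) % m) = 1
        rw [show (m - 1 + 1 + 2) % m = 2 from modh (by omega) (by omega)]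
        exact r2_one (by omega)
    have h3 : (fun d : Fin 3 => r3 m ((m - 1 + 1 + (d : ℕ)) % m)) = (![0,0,0] : Fin 3 → ZMod 2) := by
      funext d; fin_cases d
      · show r3 m ((m - 1 + 1 + 0) % m) = 0
        rw [show (m - 1 + 1 + 0) % m = 0 from modh (by omega) (by omega)]
        exact r3_zero (by omega)
      · show r3 m ((m - 1 + 1 + 1) % m) = 0
        rw [show (m - 1 + 1 + 1) % m = 1 from modh (by omega) (by omega)]
        exact r3_zero (by omega)
      · show r3 m ((m - 1 + 1 + 2) % m) = 0
        rw [show (m - 1 + 1 + 2) % m = 2 from modh (by omega) (by omega)]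
        exact r3_zero (by omega)
    rw [h1, h2, h3]; decide
lemma cast_inj_of_lt {m a b : ℕ} (ha : a < m) (hb : b < m)
    (h : ((a : ℕ) : ZMod m) = ((b : ℕ) : ZMod m)) : a = b := by
  have := congrArg ZMod.val h
  rwa [ZMod.val_cast_of_lt ha, ZMod.val_cast_of_lt hb] at this

lemma mem_sideInfo_iff {m : ℕ} (hm : 8 ≤ m) {i j : ZMod m} :
    j ∈ sideInfo m (m - 3) i ↔ ¬(j = i + 1 ∨ j = i + 2 ∨ j = i + 3) := by
  haveI : NeZero m := ⟨by omega⟩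
  have hcast : ∀ a : ℕ, a < m → i - ((m - a : ℕ) : ZMod m) = i + (a : ZMod m) := by
    intro a ha
    rw [Nat.cast_sub (by omega), ZMod.natCast_self]
    ring
  constructor
  · rintro ⟨k, hk, rfl⟩
    rw [Finset.mem_range] at hk
    rintro (h | h | h)
    · have h1 : i - (k : ZMod m) = i - ((m - 1 : ℕ) : ZMod m) := by
        rw [hcast 1 (by omega), h]; push_cast; ring
      have h2 := cast_inj_of_lt (show k < m by omega) (show m - 1 < m by omega)
        (sub_right_injective h1)
      omega
    · have h1 : i - (k : ZMod m) = i - ((m - 2 : ℕ) : ZMod m) := by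
        rw [hcast 2 (by omega), h]; push_cast; ring
      have h2 := cast_inj_of_lt (show k < m by omega) (show m - 2 < m by omega)
        (sub_right_injective h1)
      omega
    · have h1 : i - (k : ZMod m) = i - ((m - 3 : ℕ) : ZMod m) := by
        rw [hcast 3 (by omega), h]; push_cast; ring
      have h2 := cast_inj_of_lt (show k < m by omega) (show m - 3 < m by omega)
        (sub_right_injective h1)
      omega
  · intro h
    refine ⟨(i - j).val, ?_, ?_⟩
    · rw [Finset.mem_range]
      have hlt : (i - j).val < m := ZMod.val_lt _
      have hne : ∀ a : ℕ, a < m → (i - j).val = m - a → (j = i + (a : ZMod m)) := by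
        intro a ha hval
        have hv : (((i - j).val : ℕ) : ZMod m) = i - j := ZMod.natCast_rightInverse _
        rw [hval] at hv
        have h2 : i - j = i - (i + (a : ZMod m)) := by
          rw [← hv, ← hcast a ha]; ring
        exact sub_right_injective h2
      have h1 : (i - j).val ≠ m - 1 := fun hc => h (Or.inl (by
        have := hne 1 (by omega) hc; simpa using this))
      have h2 : (i - j).val ≠ m - 2 := fun hc => h (Or.inr (Or.inl (by
        have := hne 2 (by omega) hc; simpa using this)))
      have h3 : (i - j).val ≠ m - 3 := fun hc => h (Or.inr (Or.inr (by
        have := hne 3 (by omega) hc; simpa using this)))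
      omega
    · have hv : (((i - j).val : ℕ) : ZMod m) = i - j := ZMod.natCast_rightInverse _
      rw [hv]; ring

lemma mem_span_triple {v1 v2 v3 x : Fin 3 → ZMod 2}
    (h : x ∈ Submodule.span (ZMod 2) {v1, v2, v3}) :
    ∃ a b c : ZMod 2, a • v1 + b • v2 + c • v3 = x := by
  rw [show ({v1, v2, v3} : Set (Fin 3 → ZMod 2)) = insert v1 (insert v2 {v3}) from rfl,
    Submodule.mem_span_insert] at h
  obtain ⟨a, y, hy, rfl⟩ := h
  rw [Submodule.mem_span_insert] at hy
  obtain ⟨b, z, hz, rfl⟩ := hy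
  rw [Submodule.mem_span_singleton] at hz
  obtain ⟨c, rfl⟩ := hz
  exact ⟨a, b, c, add_assoc _ _ _⟩

lemma mem_span_side {m : ℕ} (hm : 8 ≤ m) {A : Set (ZMod m)} {w : ZMod m → ZMod 2}
    (h : ∀ k, w k ≠ 0 → k ∈ A) :
    w ∈ Submodule.span (ZMod 2) {v | ∃ k ∈ A, v = Pi.single k (1 : ZMod 2)} := by
  haveI : NeZero m := ⟨by omega⟩
  have hw : w = ∑ k : ZMod m, w k • Pi.single k (1 : ZMod 2) := by
    funext j
    rw [Finset.sum_apply, Finset.sum_eq_single j]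
    · simp
    · intro b _ hb
      simp [Pi.single_eq_of_ne (Ne.symm hb)]
    · intro hj; exact absurd (Finset.mem_univ j) hj
  rw [hw]
  refine Submodule.sum_mem _ fun k _ => ?_
  by_cases hk : w k = 0
  · simp [hk]
  · exact Submodule.smul_mem _ _ (Submodule.subset_span ⟨k, h k hk, rfl⟩)

lemma window_ne {m : ℕ} (hm : 8 ≤ m) (i k : ZMod m)
    (hk : k ∈ sideInfo m (m - 3) i) (d : Fin 3) :
    i + 1 + ((d : ℕ) : ZMod m) ≠ k := by
  rw [mem_sideInfo_iff hm] at hk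
  fin_cases d
  · intro hc; apply hk; left; rw [← hc]
    show i + 1 + (((0 : Fin 3) : ℕ) : ZMod m) = i + 1
    norm_num
  · intro hc; apply hk; right; left; rw [← hc]
    show i + 1 + (((1 : Fin 3) : ℕ) : ZMod m) = i + 2
    rw [show (((1 : Fin 3) : ℕ) : ZMod m) = 1 from by norm_num]; ring
  · intro hc; apply hk; right; right; rw [← hc]
    show i + 1 + (((2 : Fin 3) : ℕ) : ZMod m) = i + 3
    rw [show (((2 : Fin 3) : ℕ) : ZMod m) = 2 from by norm_num]; ring

lemma window_span {m : ℕ} (hm : 8 ≤ m) (i : ZMod m) {v : ZMod m → ZMod 2}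
    (hv : v ∈ Submodule.span (ZMod 2)
      (Set.range (Grow m) ∪ {u | ∃ k ∈ sideInfo m (m - 3) i, u = Pi.single k (1 : ZMod 2)})) :
    ∃ a b c : ZMod 2,
      a • Wmap m i (Grow m 0) + b • Wmap m i (Grow m 1) + c • Wmap m i (Grow m 2)
        = Wmap m i v := by
  have h1 : Wmap m i v ∈ Submodule.map (Wmap m i) (Submodule.span (ZMod 2)
      (Set.range (Grow m) ∪ {u | ∃ k ∈ sideInfo m (m - 3) i, u = Pi.single k (1 : ZMod 2)})) :=
    Submodule.mem_map_of_mem hv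
  rw [Submodule.map_span] at h1
  have h2 : (Wmap m i) ''
      (Set.range (Grow m) ∪ {u | ∃ k ∈ sideInfo m (m - 3) i, u = Pi.single k (1 : ZMod 2)}) ⊆
      ↑(Submodule.span (ZMod 2)
        ({Wmap m i (Grow m 0), Wmap m i (Grow m 1), Wmap m i (Grow m 2)} :
          Set (Fin 3 → ZMod 2))) := by
    rintro x ⟨y, hy, rfl⟩
    rcases hy with ⟨t, rfl⟩ | ⟨k, hk, rfl⟩
    · fin_cases t
      · exact Submodule.subset_span (by left; rfl)
      · exact Submodule.subset_span (by right; left; rfl)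
      · exact Submodule.subset_span (by right; right; rfl)
    · have hz : Wmap m i (Pi.single k (1 : ZMod 2)) = 0 := by
        funext d
        rw [Wmap_apply]
        exact Pi.single_eq_of_ne (window_ne hm i k hk d) _
      rw [hz]
      exact Submodule.zero_mem _
  exact mem_span_triple ((Submodule.span_le.mpr h2) h1)

lemma span_of_window {m : ℕ} (hm : 8 ≤ m) (i : ZMod m) (j : ZMod m)
    (h : ∃ a b c : ZMod 2,
      a • Wmap m i (Grow m 0) + b • Wmap m i (Grow m 1) + c • Wmap m i (Grow m 2)
        = Wmap m i (Pi.single j (1 : ZMod 2))) :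
    Pi.single j (1 : ZMod 2) ∈ Submodule.span (ZMod 2)
      (Set.range (Grow m) ∪ {u | ∃ k ∈ sideInfo m (m - 3) i, u = Pi.single k (1 : ZMod 2)}) := by
  obtain ⟨a, b, c, habc⟩ := h
  set S := Set.range (Grow m) ∪
    {u | ∃ k ∈ sideInfo m (m - 3) i, u = Pi.single k (1 : ZMod 2)} with hS
  set u : ZMod m → ZMod 2 := a • Grow m 0 + b • Grow m 1 + c • Grow m 2 with hu
  have hmemu : u ∈ Submodule.span (ZMod 2) S := by
    refine add_mem (add_mem ?_ ?_) ?_ <;>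
      exact Submodule.smul_mem _ _ (Submodule.subset_span (Or.inl ⟨_, rfl⟩))
  set w : ZMod m → ZMod 2 := (Pi.single j (1 : ZMod 2) : ZMod m → ZMod 2) - u with hwdef
  have hW : ∀ d : Fin 3, w (i + 1 + ((d : ℕ) : ZMod m)) = 0 := by
    intro d
    have hz : Wmap m i w = 0 := by
      rw [hwdef, map_sub]
      rw [hu]
      simp only [map_add, map_smul]
      rw [← habc]
      abel
    simpa [Wmap_apply] using congrFun hz d
  have hsupp : ∀ k, w k ≠ 0 → k ∈ sideInfo m (m - 3) i := by
    intro k hk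
    by_contra hks
    rw [mem_sideInfo_iff hm] at hks
    rcases not_not.mp hks with hk1 | hk1 | hk1
    · refine hk ?_
      rw [hk1, show i + 1 = i + 1 + (((0 : Fin 3) : ℕ) : ZMod m) from by norm_num]
      exact hW 0
    · refine hk ?_
      rw [hk1, show i + 2 = i + 1 + (((1 : Fin 3) : ℕ) : ZMod m) from by
        rw [show (((1 : Fin 3) : ℕ) : ZMod m) = 1 from by norm_num]; ring]
      exact hW 1
    · refine hk ?_
      rw [hk1, show i + 3 = i + 1 + (((2 : Fin 3) : ℕ) : ZMod m) from by
        rw [show (((2 : Fin 3) : ℕ) : ZMod m) = 2 from by norm_num]; ring]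
      exact hW 2
  have h2 : w ∈ Submodule.span (ZMod 2) S := by
    apply Submodule.span_mono Set.subset_union_right
    exact mem_span_side hm hsupp
  have h3 : (Pi.single j (1 : ZMod 2) : ZMod m → ZMod 2) = w + u := by
    rw [hwdef]; abel
  rw [h3]
  exact add_mem h2 hmemu

lemma Wmap_single {m : ℕ} (hm : 8 ≤ m) (i : ZMod m) (d : Fin 3) :
    Wmap m i (Pi.single (i + 1 + ((d : ℕ) : ZMod m)) (1 : ZMod 2)) = Pi.single d 1 := by
  funext d'
  rw [Wmap_apply]
  rcases eq_or_ne d' d with rfl | hne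
  · simp
  · rw [Pi.single_eq_of_ne hne]
    refine Pi.single_eq_of_ne ?_ _
    intro hc
    apply hne
    have h2 : (((d' : ℕ) : ℕ) : ZMod m) = (((d : ℕ) : ℕ) : ZMod m) := add_left_cancel hc
    have hd' : (d' : ℕ) < 3 := d'.isLt
    have hd : (d : ℕ) < 3 := d.isLt
    exact Fin.ext (cast_inj_of_lt (by omega) (by omega) h2)

lemma val_window {m : ℕ} (hm : 8 ≤ m) (i : ZMod m) (d : Fin 3) :
    (i + 1 + ((d : ℕ) : ZMod m)).val = (i.val + 1 + (d : ℕ)) % m := by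
  haveI : NeZero m := ⟨by omega⟩
  have hi : ((i.val : ℕ) : ZMod m) = i := ZMod.natCast_rightInverse i
  have h1 : ((i.val + 1 + (d : ℕ) : ℕ) : ZMod m) = i + 1 + ((d : ℕ) : ZMod m) := by
    push_cast [hi]; ring
  rw [← h1, ZMod.val_natCast]

lemma Wmap_rows {m : ℕ} (hm : 8 ≤ m) (i : ZMod m) :
    Wmap m i (Grow m 0) = (fun d : Fin 3 => r1 m ((i.val + 1 + (d : ℕ)) % m)) ∧
    Wmap m i (Grow m 1) = (fun d : Fin 3 => r2 m ((i.val + 1 + (d : ℕ)) % m)) ∧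
    Wmap m i (Grow m 2) = (fun d : Fin 3 => r3 m ((i.val + 1 + (d : ℕ)) % m)) := by
  refine ⟨?_, ?_, ?_⟩
  · funext d
    rw [Wmap_apply]
    show r1 m (i + 1 + ((d : ℕ) : ZMod m)).val = _
    rw [val_window hm]
  · funext d
    rw [Wmap_apply]
    show r2 m (i + 1 + ((d : ℕ) : ZMod m)).val = _
    rw [val_window hm]
  · funext d
    rw [Wmap_apply]
    show r3 m (i + 1 + ((d : ℕ) : ZMod m)).val = _
    rw [val_window hm]
lemma side_subset_of_vals {m : ℕ} (hm : 8 ≤ m) (i : ZMod m) {f : ZMod m → ZMod 2}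
    (h : ∀ j : ZMod m, f j ≠ 0 → j ≠ i + 1 ∧ j ≠ i + 2 ∧ j ≠ i + 3) :
    Function.support f ⊆ sideInfo m (m - 3) i := by
  intro j hj
  rw [mem_sideInfo_iff hm]
  obtain ⟨h1, h2, h3⟩ := h j hj
  rintro (hc | hc | hc)
  · exact h1 hc
  · exact h2 hc
  · exact h3 hc

lemma val_coe {m a : ℕ} (h : a < m) : ((a : ℕ) : ZMod m).val = a := ZMod.val_cast_of_lt h

lemma decSet_char {m : ℕ} (hm : 8 ≤ m) (he : m % 2 = 0) (i : ZMod m) :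
    ∃ j0 : ZMod m, decSet m (m - 3) (Grow m) i = {j0} := by
  haveI : NeZero m := ⟨by omega⟩
  obtain ⟨hW1, hW2, hW3⟩ := Wmap_rows hm i
  obtain ⟨r, hr⟩ := key_nat m i.val hm he (ZMod.val_lt i)
  rw [← hW1, ← hW2, ← hW3] at hr
  refine ⟨i + 1 + ((r : ℕ) : ZMod m), ?_⟩
  ext j
  simp only [Set.mem_singleton_iff]
  constructor
  · rintro ⟨hjs, hjspan⟩
    rw [mem_sideInfo_iff hm, not_not] at hjs
    have hform : ∃ d : Fin 3, j = i + 1 + ((d : ℕ) : ZMod m) := by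
      rcases hjs with h | h | h
      · exact ⟨0, by rw [h, show (((0 : Fin 3) : ℕ) : ZMod m) = 0 from by norm_num]; ring⟩
      · exact ⟨1, by rw [h, show (((1 : Fin 3) : ℕ) : ZMod m) = 1 from by norm_num]; ring⟩
      · exact ⟨2, by rw [h, show (((2 : Fin 3) : ℕ) : ZMod m) = 2 from by norm_num]; ring⟩
    obtain ⟨d, rfl⟩ := hform
    have h1 := window_span hm i hjspan
    rw [Wmap_single hm i d] at h1
    have hd := (hr d).mp h1
    rw [hd]
  · rintro rfl
    constructor
    · rw [mem_sideInfo_iff hm, not_not]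
      fin_cases r
      · left
        show i + 1 + (((0 : Fin 3) : ℕ) : ZMod m) = i + 1
        norm_num
      · right; left
        show i + 1 + (((1 : Fin 3) : ℕ) : ZMod m) = i + 2
        rw [show (((1 : Fin 3) : ℕ) : ZMod m) = 1 from by norm_num]; ring
      · right; right
        show i + 1 + (((2 : Fin 3) : ℕ) : ZMod m) = i + 3
        rw [show (((2 : Fin 3) : ℕ) : ZMod m) = 2 from by norm_num]; ring
    · apply span_of_window hm i
      rw [Wmap_single hm i r]
      exact (hr r).mpr rfl

end Aux

theorem feasible_s_eq_m_sub_three_even (m : ℕ) (hm : 8 ≤ m) (heven : Even m) :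
    ∃ G : Fin 3 → ZMod m → ZMod 2,
      IsDecentralizedCode m (m - 3) G ∧ Correct m (m - 3) G ∧
      Secure m (m - 3) G := by
  haveI : NeZero m := ⟨by omega⟩
  have he : m % 2 = 0 := Nat.even_iff.mp heven
  refine ⟨Grow m, ?_, ?_, ?_⟩
  · -- decentralized
    intro t
    fin_cases t
    · -- row 1, user i = 2 : window values 3,4,5
      refine ⟨((2 : ℕ) : ZMod m), side_subset_of_vals hm _ fun j hj => ?_⟩
      have hj1 : j.val < 2 := by
        by_contra hc
        exact hj (r1_zero (m := m) hc)
      refine ⟨fun h => ?_, fun h => ?_, fun h => ?_⟩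
      · have : j.val = 3 := by
          rw [h, show ((2 : ℕ) : ZMod m) + 1 = ((3 : ℕ) : ZMod m) from by push_cast; ring,
            val_coe (by omega)]
        omega
      · have : j.val = 4 := by
          rw [h, show ((2 : ℕ) : ZMod m) + 2 = ((4 : ℕ) : ZMod m) from by push_cast; ring,
            val_coe (by omega)]
        omega
      · have : j.val = 5 := by
          rw [h, show ((2 : ℕ) : ZMod m) + 3 = ((5 : ℕ) : ZMod m) from by push_cast; ring,
            val_coe (by omega)]
        omega
    · -- row 2, user i = m - 2 : window values m-1, 0, 1
      refine ⟨((m - 2 : ℕ) : ZMod m), side_subset_of_vals hm _ fun j hj => ?_⟩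
      have hC : j.val = 2 ∨ j.val = 3 ∨
          (4 ≤ j.val ∧ ((m - 1 - j.val) % 4 = 2 ∨ (m - 1 - j.val) % 4 = 3)) := by
        by_contra hc
        exact hj (r2_zero hc)
      have hjlt : j.val < m := ZMod.val_lt j
      have hb : 2 ≤ j.val ∧ j.val ≤ m - 3 := by omega
      refine ⟨fun h => ?_, fun h => ?_, fun h => ?_⟩
      · have : j.val = m - 1 := by
          rw [h, show ((m - 2 : ℕ) : ZMod m) + 1 = ((m - 1 : ℕ) : ZMod m) from by
            rw [Nat.cast_sub (by omega), Nat.cast_sub (by omega)]; ring,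
            val_coe (by omega)]
        omega
      · have : j.val = 0 := by
          rw [h, show ((m - 2 : ℕ) : ZMod m) + 2 = 0 from by
            rw [Nat.cast_sub (by omega), ZMod.natCast_self]; ring]
          exact ZMod.val_zero
        omega
      · have : j.val = 1 := by
          rw [h, show ((m - 2 : ℕ) : ZMod m) + 3 = ((1 : ℕ) : ZMod m) from by
            rw [Nat.cast_sub (by omega), ZMod.natCast_self]; push_cast; ring,
            val_coe (by omega)]
        omega
    · -- row 3, user i = 0 : window values 1,2,3
      refine ⟨((0 : ℕ) : ZMod m), side_subset_of_vals hm _ fun j hj => ?_⟩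
      have hC : j.val = 4 ∨ j.val = 5 ∨
          (6 ≤ j.val ∧ ((m - 1 - j.val) % 4 = 0 ∨ (m - 1 - j.val) % 4 = 1)) := by
        by_contra hc
        exact hj (r3_zero hc)
      refine ⟨fun h => ?_, fun h => ?_, fun h => ?_⟩
      · have : j.val = 1 := by
          rw [h, show ((0 : ℕ) : ZMod m) + 1 = ((1 : ℕ) : ZMod m) from by push_cast; ring,
            val_coe (by omega)]
        omega
      · have : j.val = 2 := by
          rw [h, show ((0 : ℕ) : ZMod m) + 2 = ((2 : ℕ) : ZMod m) from by push_cast; ring,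
            val_coe (by omega)]
        omega
      · have : j.val = 3 := by
          rw [h, show ((0 : ℕ) : ZMod m) + 3 = ((3 : ℕ) : ZMod m) from by push_cast; ring,
            val_coe (by omega)]
        omega
  · -- correct
    intro i
    obtain ⟨j0, hj0⟩ := decSet_char hm he i
    rw [hj0]
    exact Set.singleton_nonempty j0
  · -- secure
    intro i
    obtain ⟨j0, hj0⟩ := decSet_char hm he i
    rw [hj0]
    exact Set.subsingleton_singleton
end
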